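/- arXiv:2010.00495 — 11 statements merged into one kernel-verified Lean document; each statement's English description precedes it below -/
import Mathlib

section
/- Let A be a k-uniform hypergraph and B a k'-uniform hypergraph on the same vertex set, each with exactly ℓ edges. Then the sum of |A∩A'| over unordered pairs of distinct edges of A, plus the sum of |B∩B'| over unordered pairs of distinct edges of B, is at least the sum of |A∩B| over all pairs (A edge of A, B edge of B), minus ℓ(k+k')/2. -/
open Finset

lemma pair_sum {V : Type*} [Fintype V] [DecidableEq V] (S T : Finset (Finset V)) :
    ∑ a ∈ S, ∑ b ∈ T, ((a ∩ b).card : ℝ)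
      = ∑ v : V, ((S.filter (fun e => v ∈ e)).card : ℝ) * ((T.filter (fun e => v ∈ e)).card : ℝ) := by
  have h1 : ∀ a b : Finset V, ((a ∩ b).card : ℝ)
      = ∑ v : V, (if v ∈ a then (1:ℝ) else 0) * (if v ∈ b then (1:ℝ) else 0) := by
    intro a b
    calc ((a ∩ b).card : ℝ)
        = ((Finset.univ.filter (fun v => v ∈ a ∧ v ∈ b)).card : ℝ) := by
          congr 1; apply Finset.card_nbij id (by intro x hx; simpa using hx)
            (by intro x hx y hy h; exact h) (by intro x hx; simp at hx; exact ⟨x, by simp [hx.1, hx.2], rfl⟩)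
      _ = ∑ v : V, if v ∈ a ∧ v ∈ b then (1:ℝ) else 0 := by rw [Finset.sum_boole]
      _ = ∑ v : V, (if v ∈ a then (1:ℝ) else 0) * (if v ∈ b then (1:ℝ) else 0) := by
          refine Finset.sum_congr rfl fun v _ => ?_
          by_cases ha : v ∈ a <;> by_cases hb : v ∈ b <;> simp [ha, hb]
  simp only [h1]
  calc ∑ a ∈ S, ∑ b ∈ T, ∑ v : V, (if v ∈ a then (1:ℝ) else 0) * (if v ∈ b then (1:ℝ) else 0)
      = ∑ a ∈ S, ∑ v : V, ∑ b ∈ T, (if v ∈ a then (1:ℝ) else 0) * (if v ∈ b then (1:ℝ) else 0) :=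
        Finset.sum_congr rfl fun a _ => Finset.sum_comm
    _ = ∑ v : V, ∑ a ∈ S, ∑ b ∈ T, (if v ∈ a then (1:ℝ) else 0) * (if v ∈ b then (1:ℝ) else 0) :=
        Finset.sum_comm
    _ = ∑ v : V, ((S.filter (fun e => v ∈ e)).card : ℝ) * ((T.filter (fun e => v ∈ e)).card : ℝ) := by
        refine Finset.sum_congr rfl fun v _ => ?_
        rw [← Finset.sum_mul_sum]
        simp [Finset.sum_boole]

/-- Proposition 2.2: for a `k`-uniform hypergraph `A` and a `k'`-uniform hypergraph `B`
on the same vertex set, each with `ℓ` edges, the sum of intersection sizes over unordered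
pairs of distinct edges within `A` plus the same within `B` is at least the sum of
intersection sizes over all pairs (edge of `A`, edge of `B`) minus `ℓ(k+k')/2`.
(Sums over unordered pairs are expressed as half the sum over `offDiag`.) -/
theorem stmt_0 {V : Type*} [Fintype V] [DecidableEq V]
    (A B : Finset (Finset V)) (k k' ℓ : ℕ)
    (hA : ∀ e ∈ A, e.card = k) (hB : ∀ e ∈ B, e.card = k')
    (hAcard : A.card = ℓ) (hBcard : B.card = ℓ) :
    (∑ p ∈ A.offDiag, ((p.1 ∩ p.2).card : ℝ)) / 2
      + (∑ p ∈ B.offDiag, ((p.1 ∩ p.2).card : ℝ)) / 2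
    ≥ (∑ a ∈ A, ∑ b ∈ B, ((a ∩ b).card : ℝ)) - ℓ * (k + k') / 2 := by
  set F : V → ℝ := fun v => ((A.filter (fun e => v ∈ e)).card : ℝ) with hF
  set G : V → ℝ := fun v => ((B.filter (fun e => v ∈ e)).card : ℝ) with hG
  have split : ∀ (S : Finset (Finset V)) (f : Finset V × Finset V → ℝ),
      ∑ p ∈ S ×ˢ S, f p = ∑ p ∈ S.offDiag, f p + ∑ a ∈ S, f (a, a) := by
    intro S f
    rw [← Finset.diag_union_offDiag S, Finset.sum_union (Finset.disjoint_diag_offDiag S),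
      Finset.sum_diag, add_comm]
  have hAoff : ∑ p ∈ A.offDiag, ((p.1 ∩ p.2).card : ℝ) = ∑ v : V, F v * F v - ℓ * k := by
    have := split A (fun p => ((p.1 ∩ p.2).card : ℝ))
    rw [Finset.sum_product] at this
    rw [pair_sum A A] at this
    have hdiag : ∑ a ∈ A, ((a ∩ a).card : ℝ) = ℓ * k := by
      rw [Finset.sum_congr rfl (fun a ha => by simp [hA a ha] :
        ∀ a ∈ A, ((a ∩ a).card : ℝ) = (k:ℝ))]
      simp [hAcard, mul_comm]
    linarith [this, hdiag]
  have hBoff : ∑ p ∈ B.offDiag, ((p.1 ∩ p.2).card : ℝ) = ∑ v : V, G v * G v - ℓ * k' := by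
    have := split B (fun p => ((p.1 ∩ p.2).card : ℝ))
    rw [Finset.sum_product] at this
    rw [pair_sum B B] at this
    have hdiag : ∑ b ∈ B, ((b ∩ b).card : ℝ) = ℓ * k' := by
      rw [Finset.sum_congr rfl (fun b hb => by simp [hB b hb] :
        ∀ b ∈ B, ((b ∩ b).card : ℝ) = (k':ℝ))]
      simp [hBcard, mul_comm]
    linarith [this, hdiag]
  have hcross : ∑ a ∈ A, ∑ b ∈ B, ((a ∩ b).card : ℝ) = ∑ v : V, F v * G v := pair_sum A B
  have key : (0:ℝ) ≤ ∑ v : V, (F v - G v)^2 :=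
    Finset.sum_nonneg fun v _ => sq_nonneg _
  have expand : ∑ v : V, (F v - G v)^2
      = ∑ v : V, F v * F v - 2 * ∑ v : V, F v * G v + ∑ v : V, G v * G v := by
    have e1 : ∑ v : V, (F v - G v)^2
        = ∑ v : V, (F v * F v - 2 * (F v * G v) + G v * G v) :=
      Finset.sum_congr rfl fun v _ => by ring
    rw [e1, Finset.sum_add_distrib, Finset.sum_sub_distrib, ← Finset.mul_sum]
  rw [hAoff, hBoff, hcross]
  nlinarith [key, expand]
end

section
/- Let H be a k-uniform hypergraph and S, T disjoint collections of ℓ ≥ 2 edges of H such that there exist x vertices each belonging to every edge in S and to no edge in T. Define λ_S = (1/C(ℓ,2)) ∑_{{e,f}⊆S} |e∩f|, λ_T analogously, and λ_{S,T} = (1/ℓ²) ∑_{e∈S, f∈T} |e∩f|. Then (λ_S + λ_T)/2 ≥ λ_{S,T} + x/2 − k/(ℓ−1). -/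
open Finset

/-- Lemma 2.3: averaging lemma. `S, T` are disjoint collections of `ℓ ≥ 2` edges of a
`k`-uniform hypergraph `H`, and there is a set `W` of `x` vertices contained in every edge
of `S` and disjoint from every edge of `T`. Then `(λ_S + λ_T)/2 ≥ λ_{S,T} + x/2 − k/(ℓ−1)`,
where `λ_S`, `λ_T`, `λ_{S,T}` are the average pairwise intersection sizes within `S`, within
`T`, and across `S` and `T`. (The average over unordered pairs equals the sum over `offDiag`
divided by `ℓ(ℓ−1)`.) -/
theorem stmt_2 {V : Type*} [Fintype V] [DecidableEq V]
    (H : Finset (Finset V)) (k ℓ x : ℕ) (hℓ : 2 ≤ ℓ)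
    (hunif : ∀ e ∈ H, e.card = k)
    (S T : Finset (Finset V)) (hSH : S ⊆ H) (hTH : T ⊆ H) (hdisj : Disjoint S T)
    (hS : S.card = ℓ) (hT : T.card = ℓ)
    (W : Finset V) (hW : W.card = x)
    (hWS : ∀ e ∈ S, W ⊆ e) (hWT : ∀ e ∈ T, Disjoint W e) :
    ((∑ p ∈ S.offDiag, ((p.1 ∩ p.2).card : ℝ)) / (ℓ * (ℓ - 1))
      + (∑ p ∈ T.offDiag, ((p.1 ∩ p.2).card : ℝ)) / (ℓ * (ℓ - 1))) / 2
    ≥ (∑ e ∈ S, ∑ f ∈ T, ((e ∩ f).card : ℝ)) / (ℓ * ℓ) + x / 2 - k / (ℓ - 1) := by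
  classical
  set a : V → ℝ := fun v => ((S.filter (fun e => v ∈ e)).card : ℝ) with ha
  set b : V → ℝ := fun v => ((T.filter (fun e => v ∈ e)).card : ℝ) with hb
  have key : ∀ (A B : Finset (Finset V)), ∑ e ∈ A, ∑ f ∈ B, ((e ∩ f).card : ℝ)
      = ∑ v : V, ((A.filter (fun e => v ∈ e)).card : ℝ) * ((B.filter (fun e => v ∈ e)).card : ℝ) := by
    intro A B
    have h1 : ∀ e f : Finset V, ((e ∩ f).card : ℝ)
        = ∑ v : V, (if v ∈ e then (1:ℝ) else 0) * (if v ∈ f then (1:ℝ) else 0) := by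
      intro e f
      have h0 : ∀ v : V, (if v ∈ e then (1:ℝ) else 0) * (if v ∈ f then (1:ℝ) else 0)
          = if v ∈ e ∩ f then (1:ℝ) else 0 := by
        intro v; by_cases h1 : v ∈ e <;> by_cases h2 : v ∈ f <;> simp [h1, h2]
      simp_rw [h0, Finset.sum_boole, Finset.filter_mem_eq_inter, Finset.univ_inter]
    have h2 : ∀ e : Finset V, ∑ f ∈ B, ((e ∩ f).card : ℝ)
        = ∑ v : V, (if v ∈ e then (1:ℝ) else 0) * ((B.filter (fun g => v ∈ g)).card : ℝ) := by
      intro e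
      simp_rw [h1]
      rw [Finset.sum_comm]
      refine Finset.sum_congr rfl fun v _ => ?_
      rw [← Finset.mul_sum, Finset.sum_boole]
    simp_rw [h2]
    rw [Finset.sum_comm]
    refine Finset.sum_congr rfl fun v _ => ?_
    rw [← Finset.sum_mul, Finset.sum_boole]
  have deg : ∀ (A : Finset (Finset V)), A ⊆ H → A.card = ℓ →
      ∑ v : V, ((A.filter (fun e => v ∈ e)).card : ℝ) = (ℓ : ℝ) * k := by
    intro A hAH hA
    have h3 : ∑ v : V, ((A.filter (fun e => v ∈ e)).card : ℝ)
        = ∑ e ∈ A, (e.card : ℝ) := by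
      simp_rw [Finset.card_filter]
      push_cast
      rw [Finset.sum_comm]
      refine Finset.sum_congr rfl fun e _ => ?_
      rw [Finset.sum_boole, Finset.filter_mem_eq_inter, Finset.univ_inter]
    rw [h3, Finset.sum_congr rfl (fun e he => by rw [hunif e (hAH he)]),
      Finset.sum_const, hA, nsmul_eq_mul]
  have offd : ∀ (A : Finset (Finset V)), A ⊆ H → A.card = ℓ →
      ∑ p ∈ A.offDiag, ((p.1 ∩ p.2).card : ℝ)
      = (∑ v : V, ((A.filter (fun e => v ∈ e)).card : ℝ)^2) - (ℓ : ℝ) * k := by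
    intro A hAH hA
    have hsplit : ∑ p ∈ A ×ˢ A, ((p.1 ∩ p.2).card : ℝ)
        = ∑ p ∈ A.diag, ((p.1 ∩ p.2).card : ℝ) + ∑ p ∈ A.offDiag, ((p.1 ∩ p.2).card : ℝ) := by
      rw [← Finset.sum_union (Finset.disjoint_diag_offDiag A), Finset.diag_union_offDiag]
    have hprod : ∑ p ∈ A ×ˢ A, ((p.1 ∩ p.2).card : ℝ)
        = ∑ v : V, ((A.filter (fun e => v ∈ e)).card : ℝ)^2 := by
      rw [Finset.sum_product, key A A]
      simp [sq]
    have hdiag : ∑ p ∈ A.diag, ((p.1 ∩ p.2).card : ℝ) = (ℓ : ℝ) * k := by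
      rw [Finset.sum_diag]
      simp only [Finset.inter_self]
      rw [Finset.sum_congr rfl (fun e he => by rw [hunif e (hAH he)]),
        Finset.sum_const, hA, nsmul_eq_mul]
    rw [hprod, hdiag] at hsplit
    linarith
  have eS := offd S hSH hS
  have eT := offd T hTH hT
  have eST := key S T
  rw [eS, eT, eST]
  set A2 := ∑ v : V, (a v)^2 with hA2
  set B2 := ∑ v : V, (b v)^2 with hB2
  set AB := ∑ v : V, a v * b v with hAB
  set L : ℝ := (ℓ : ℝ) with hL
  have hL2 : (2:ℝ) ≤ L := by rw [hL]; exact_mod_cast hℓ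
  have haW : ∀ v ∈ W, a v = L := by
    intro v hv
    have h4 : S.filter (fun e => v ∈ e) = S :=
      Finset.filter_true_of_mem (fun e he => hWS e he hv)
    simp [ha, h4, hS, hL]
  have hbW : ∀ v ∈ W, b v = 0 := by
    intro v hv
    have h5 : T.filter (fun e => v ∈ e) = ∅ :=
      Finset.filter_false_of_mem (fun e he hve => (Finset.disjoint_left.mp (hWT e he)) hv hve)
    simp [hb, h5]
  have hxsum : ∑ v : V, (if v ∈ W then (1:ℝ) else 0) = (x : ℝ) := by
    rw [Finset.sum_boole]
    simp [Finset.filter_mem_eq_inter, hW]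
  have hL1 : (0:ℝ) < L - 1 := by linarith
  have hL0 : (0:ℝ) < L := by linarith
  have main : 2*(L-1)*AB + L^2*(L-1)*(x:ℝ) ≤ L * (A2 + B2) := by
    have pt : ∀ v : V, 2*(L-1)*(a v * b v) + L^2*(L-1)*(if v ∈ W then (1:ℝ) else 0)
        ≤ L * ((a v)^2 + (b v)^2) := by
      intro v
      by_cases hv : v ∈ W
      · rw [haW v hv, hbW v hv]
        simp only [hv, if_true]
        nlinarith
      · simp only [hv, if_false]
        have ha0 : 0 ≤ a v := by positivity
        have hb0 : 0 ≤ b v := by positivity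
        nlinarith [sq_nonneg (a v - b v), sq_nonneg (a v + b v)]
    calc 2*(L-1)*AB + L^2*(L-1)*(x:ℝ)
        = ∑ v : V, (2*(L-1)*(a v * b v) + L^2*(L-1)*(if v ∈ W then (1:ℝ) else 0)) := by
          rw [Finset.sum_add_distrib, ← Finset.mul_sum, ← Finset.mul_sum, hxsum, hAB]
      _ ≤ ∑ v : V, L * ((a v)^2 + (b v)^2) := Finset.sum_le_sum (fun v _ => pt v)
      _ = L * (A2 + B2) := by
          rw [← Finset.mul_sum, Finset.sum_add_distrib, hA2, hB2]
  have lhs_eq : ((A2 - L*(k:ℝ))/(L*(L-1)) + (B2 - L*(k:ℝ))/(L*(L-1)))/2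
      = (A2 + B2 - 2*L*(k:ℝ))/(2*(L*(L-1))) := by
    field_simp
    ring
  have rhs_eq : AB/(L*L) + (x:ℝ)/2 - (k:ℝ)/(L-1)
      = (2*(L-1)*AB + L^2*(L-1)*(x:ℝ) - 2*L^2*(k:ℝ))/(2*(L^2*(L-1))) := by
    field_simp
  rw [lhs_eq, rhs_eq, ge_iff_le, div_le_div_iff₀ (by positivity) (by positivity)]
  have key2 := mul_le_mul_of_nonneg_left main (show (0:ℝ) ≤ 2*L*(L-1) by positivity)
  nlinarith [key2]
end

section
/- Any k-uniform hypergraph that is not 2-colorable has at least 2^{k−1} edges. -/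
open Finset

/-- Erdős' bound: any `k`-uniform hypergraph that is not 2-colorable (i.e. every
2-coloring of the vertices yields a monochromatic edge) has at least `2^(k-1)` edges. -/
theorem stmt_3 {V : Type*} [Fintype V] [DecidableEq V]
    (H : Finset (Finset V)) (k : ℕ)
    (hunif : ∀ e ∈ H, e.card = k)
    (hnc : ¬ ∃ c : V → Bool, ∀ e ∈ H, ∃ u ∈ e, ∃ v ∈ e, c u ≠ c v) :
    2 ^ (k - 1) ≤ H.card := by
  classical
  push_neg at hnc
  obtain ⟨e0, he0H, -⟩ := hnc (fun _ => true)
  rcases Nat.eq_zero_or_pos k with hk0 | hk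
  · simpa [hk0] using Finset.card_pos.mpr ⟨e0, he0H⟩
  set n := Fintype.card V with hn
  have hkn : k ≤ n := (hunif e0 he0H) ▸ e0.card_le_univ
  set T : Finset ((V → Bool) × Finset V) :=
    (Finset.univ ×ˢ H).filter (fun p => ∀ u ∈ p.2, ∀ v ∈ p.2, p.1 u = p.1 v) with hT
  have hlow : 2 ^ n ≤ T.card := by
    have hx : ∀ c : V → Bool, ∃ e, (c, e) ∈ T := by
      intro c
      obtain ⟨e, heH, hm⟩ := hnc c
      exact ⟨e, Finset.mem_filter.mpr ⟨Finset.mem_product.mpr ⟨Finset.mem_univ _, heH⟩, hm⟩⟩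
    choose f hf using hx
    have : (Finset.univ : Finset (V → Bool)).card ≤ T.card :=
      Finset.card_le_card_of_injOn (fun c => (c, f c)) (fun c _ => hf c)
        (fun a _ b _ h => congrArg Prod.fst h)
    simpa [hn] using this
  have hfib : ∀ e ∈ H, (T.filter (fun p => p.2 = e)).card ≤ 2 ^ (n - k + 1) := by
    intro e heH
    have hek : e.card = k := hunif e heH
    obtain ⟨a, ha⟩ : e.Nonempty := Finset.card_pos.mp (by omega)
    have hinj : (T.filter (fun p => p.2 = e)).card ≤
        Fintype.card (({x // x ∉ e} → Bool) × Bool) := by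
      apply Finset.card_le_card_of_injOn
        (fun p => (fun x => p.1 x.1, p.1 a)) (fun p _ => Finset.mem_univ _)
      intro p hp q hq hpq
      rw [hT] at hp hq
      simp only [Finset.mem_coe, Finset.mem_filter, Finset.mem_product] at hp hq
      obtain ⟨⟨-, hpm⟩, hpe⟩ := hp
      obtain ⟨⟨-, hqm⟩, hqe⟩ := hq
      have h1 : (fun x : {x // x ∉ e} => p.1 x.1) = fun x => q.1 x.1 :=
        congrArg Prod.fst hpq
      have h2 : p.1 a = q.1 a := congrArg Prod.snd hpq
      have : p.1 = q.1 := by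
        funext x
        by_cases hx : x ∈ e
        · rw [hpm x (hpe ▸ hx) a (hpe ▸ ha), hqm x (hqe ▸ hx) a (hqe ▸ ha)]
          exact h2
        · exact congrFun h1 ⟨x, hx⟩
      exact Prod.ext this (hpe.trans hqe.symm)
    calc (T.filter (fun p => p.2 = e)).card
        ≤ Fintype.card (({x // x ∉ e} → Bool) × Bool) := hinj
      _ = 2 ^ (n - k) * 2 := by
          simp [Fintype.card_subtype_compl, hek, hn]
      _ = 2 ^ (n - k + 1) := by rw [pow_succ]
  have hup : T.card ≤ H.card * 2 ^ (n - k + 1) := by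
    rw [Finset.card_eq_sum_card_fiberwise (f := Prod.snd) (t := H)
      (fun p hp => by rw [hT] at hp; simp only [Finset.mem_coe, Finset.mem_filter, Finset.mem_product] at hp; exact hp.1.2)]
    calc ∑ e ∈ H, (T.filter (fun p => p.2 = e)).card
        ≤ ∑ _e ∈ H, 2 ^ (n - k + 1) := Finset.sum_le_sum hfib
      _ = H.card * 2 ^ (n - k + 1) := by rw [Finset.sum_const, smul_eq_mul]
  have key : 2 ^ (k - 1) * 2 ^ (n - k + 1) ≤ H.card * 2 ^ (n - k + 1) := by
    have : 2 ^ (k - 1) * 2 ^ (n - k + 1) = 2 ^ n := by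
      rw [← pow_add]; congr 1; omega
    omega
  exact Nat.le_of_mul_le_mul_right key (by positivity)
end

section
/- Every intersecting hypergraph has chromatic number at most 3, i.e., its vertices can be colored with 3 colors so that no edge is monochromatic, provided every edge has size at least 2. -/
open Finset

/-- Every intersecting hypergraph (with at least one edge, all edges of size at least 2)
has chromatic number at most 3: there is a 3-coloring of the vertices with no
monochromatic edge. -/
theorem stmt_5 {V : Type*} [Fintype V] [DecidableEq V]
    (H : Finset (Finset V)) (hne : H.Nonempty)
    (hsize : ∀ e ∈ H, 2 ≤ e.card)
    (hint : ∀ e ∈ H, ∀ f ∈ H, (e ∩ f).Nonempty) :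
    ∃ c : V → Fin 3, ∀ e ∈ H, ∃ u ∈ e, ∃ v ∈ e, c u ≠ c v := by
  obtain ⟨e₀, he₀, hmin⟩ := H.exists_min_image Finset.card hne
  have he₀ne : e₀.Nonempty := Finset.card_pos.mp (by have := hsize e₀ he₀; omega)
  obtain ⟨a, ha⟩ := he₀ne
  refine ⟨fun v => if v = a then 0 else if v ∈ e₀ then 1 else 2, ?_⟩
  intro f hf
  by_cases haf : a ∈ f
  · -- f has another vertex besides a
    have h2 : 2 ≤ f.card := hsize f hf
    obtain ⟨w, hw, hwa⟩ : ∃ w ∈ f, w ≠ a := by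
      by_contra h
      push_neg at h
      have : f ⊆ {a} := fun x hx => Finset.mem_singleton.mpr (h x hx)
      have := Finset.card_le_card this
      simp at this; omega
    refine ⟨a, haf, w, hw, ?_⟩
    simp only [if_pos rfl, if_neg hwa]
    by_cases hwe : w ∈ e₀ <;> simp [hwe]
  · -- f doesn't contain a
    obtain ⟨v, hv⟩ := hint f hf e₀ he₀
    rw [Finset.mem_inter] at hv
    have hva : v ≠ a := fun h => haf (h ▸ hv.1)
    -- f not contained in e₀, else contradicts minimality
    obtain ⟨w, hwf, hwe⟩ : ∃ w ∈ f, w ∉ e₀ := by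
      by_contra h
      push_neg at h
      have hsub : f ⊆ e₀ \ {a} := fun x hx =>
        Finset.mem_sdiff.mpr ⟨h x hx, by simp; exact fun hxa => haf (hxa ▸ hx)⟩
      have h1 := Finset.card_le_card hsub
      have h2 : (e₀ \ {a}).card < e₀.card :=
        Finset.card_lt_card (Finset.sdiff_ssubset (by simpa) (Finset.singleton_nonempty a))
      have := hmin f hf
      omega
    have hwa : w ≠ a := fun h => hwe (h ▸ ha)
    refine ⟨v, hv.1, w, hwf, ?_⟩
    simp only [if_neg hva, if_pos hv.2, if_neg hwa, if_neg hwe]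
    decide
end

section
/- Let H be a k-uniform hypergraph that is 3-chromatic (not 2-colorable) and intersecting, and let X ⊆ V(H). Then for any 0 ≤ i ≤ k − |X| there exists a set X_i ⊆ V(H) with |X_i| = |X| + i such that the number of edges of H containing X_i is at least k^{−i} times the number of edges containing X. -/
open Finset

lemma stmt_6_step {V : Type*} [Fintype V] [DecidableEq V]
    (H : Finset (Finset V)) (k : ℕ)
    (hunif : ∀ e ∈ H, e.card = k)
    (hnc : ¬ ∃ c : V → Bool, ∀ e ∈ H, ∃ u ∈ e, ∃ v ∈ e, c u ≠ c v)
    (hint : ∀ e ∈ H, ∀ f ∈ H, (e ∩ f).Nonempty)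
    (X : Finset V) (hX : X.card < k) :
    ∃ X' : Finset V, X'.card = X.card + 1 ∧
      (H.filter fun e => X ⊆ e).card ≤ k * (H.filter fun e => X' ⊆ e).card := by
  push_neg at hnc
  obtain ⟨Y, hY, hmono⟩ := hnc (fun v => decide (v ∈ X))
  have hYk : Y.card = k := hunif Y hY
  have hk : 0 < k := by omega
  have hdisj : ∀ v ∈ Y, v ∉ X := by
    intro v hv hvX
    have hYX : Y ⊆ X := by
      intro u hu
      have h := hmono u hu v hv
      simp only [decide_eq_decide] at h
      exact h.mpr hvX
    have := Finset.card_le_card hYX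
    omega
  set A := H.filter fun e => X ⊆ e with hA
  have hsub : A ⊆ Y.biUnion fun v => A.filter fun e => v ∈ e := by
    intro f hf
    have hfH : f ∈ H := (Finset.mem_filter.mp hf).1
    obtain ⟨v, hv⟩ := hint Y hY f hfH
    rw [Finset.mem_inter] at hv
    exact Finset.mem_biUnion.mpr ⟨v, hv.1, Finset.mem_filter.mpr ⟨hf, hv.2⟩⟩
  have hcard : A.card ≤ ∑ v ∈ Y, (A.filter fun e => v ∈ e).card :=
    (Finset.card_le_card hsub).trans (Finset.card_biUnion_le)
  have hex : ∃ v ∈ Y, A.card ≤ k * (A.filter fun e => v ∈ e).card := by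
    by_contra hcon
    push_neg at hcon
    have hYne : Y.Nonempty := Finset.card_pos.mp (by omega)
    have hlt : ∑ v ∈ Y, k * (A.filter fun e => v ∈ e).card < ∑ _v ∈ Y, A.card :=
      Finset.sum_lt_sum_of_nonempty hYne fun v hv => hcon v hv
    rw [Finset.sum_const, hYk, smul_eq_mul, ← Finset.mul_sum] at hlt
    have := Nat.mul_le_mul_left k hcard
    omega
  obtain ⟨v, hvY, hvle⟩ := hex
  refine ⟨insert v X, Finset.card_insert_of_notMem (hdisj v hvY), ?_⟩
  have hsub2 : (A.filter fun e => v ∈ e) ⊆ H.filter fun e => insert v X ⊆ e := by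
    intro f hf
    rw [Finset.mem_filter] at hf
    rw [hA, Finset.mem_filter] at hf
    exact Finset.mem_filter.mpr ⟨hf.1.1, Finset.insert_subset hf.2 hf.1.2⟩
  calc A.card ≤ k * (A.filter fun e => v ∈ e).card := hvle
    _ ≤ k * (H.filter fun e => insert v X ⊆ e).card :=
        Nat.mul_le_mul_left k (Finset.card_le_card hsub2)

/-- Proposition 2.4: for a `k`-uniform, 3-chromatic (not 2-colorable), intersecting
hypergraph `H` and any `X ⊆ V(H)` and `0 ≤ i ≤ k − |X|`, there is a set `Xᵢ` of size
`|X| + i` such that at least a `k^{-i}` proportion of the edges containing `X` also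
contain `Xᵢ`. -/
theorem stmt_6 {V : Type*} [Fintype V] [DecidableEq V]
    (H : Finset (Finset V)) (k : ℕ)
    (hunif : ∀ e ∈ H, e.card = k)
    (hnc : ¬ ∃ c : V → Bool, ∀ e ∈ H, ∃ u ∈ e, ∃ v ∈ e, c u ≠ c v)
    (hint : ∀ e ∈ H, ∀ f ∈ H, (e ∩ f).Nonempty)
    (X : Finset V) (i : ℕ) (hi : X.card + i ≤ k) :
    ∃ Xi : Finset V, Xi.card = X.card + i ∧
      ((H.filter fun e => Xi ⊆ e).card : ℝ)
        ≥ ((H.filter fun e => X ⊆ e).card : ℝ) / (k : ℝ) ^ i := by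
  revert hi
  induction i with
  | zero =>
    intro _hi
    exact ⟨X, by simp, by simp⟩
  | succ n ih =>
    intro hi
    obtain ⟨Xi, hcard, hineq⟩ := ih (by omega)
    have hXik : Xi.card < k := by omega
    obtain ⟨X', hc', hle⟩ := stmt_6_step H k hunif hnc hint Xi hXik
    refine ⟨X', by omega, ?_⟩
    have hk : (0 : ℝ) < (k : ℝ) := by
      have : 0 < k := by omega
      exact_mod_cast this
    have hkn : (0 : ℝ) < (k : ℝ) ^ n := pow_pos hk n
    have h1 : ((H.filter fun e => Xi ⊆ e).card : ℝ)
        ≤ (k : ℝ) * ((H.filter fun e => X' ⊆ e).card : ℝ) := by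
      exact_mod_cast hle
    rw [ge_iff_le, pow_succ, div_le_iff₀ (by positivity)]
    have h2 : ((H.filter fun e => X ⊆ e).card : ℝ)
        ≤ (k : ℝ) ^ n * ((H.filter fun e => Xi ⊆ e).card : ℝ) := by
      rw [ge_iff_le, div_le_iff₀ hkn] at hineq
      linarith [hineq]
    nlinarith [h1, h2]
end

section
/- Let H be a k-uniform, not 2-colorable hypergraph with the property that for every vertex set X of size less than k there exists a k-set Y ⊆ V(H)\X intersecting every edge of H. Then for any X ⊆ V(H) and 0 ≤ i ≤ k−|X|, there is a superset X_i of size |X|+i contained in at least a k^{−i} fraction of the edges of H that contain X. -/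
open Finset

/-- Variant of Proposition 2.4 under the weaker covering hypothesis: `H` is `k`-uniform,
not 2-colorable, and for every vertex set `X` with `|X| < k` there is a `k`-set `Y`
disjoint from `X` meeting every edge of `H`. Then for any `X` and `0 ≤ i ≤ k − |X|` there
is a superset `Xᵢ ⊇ X` of size `|X| + i` contained in at least a `k^{-i}` fraction of the
edges of `H` containing `X`. -/
theorem stmt_7 {V : Type*} [Fintype V] [DecidableEq V]
    (H : Finset (Finset V)) (k : ℕ)
    (hunif : ∀ e ∈ H, e.card = k)
    (hnc : ¬ ∃ c : V → Bool, ∀ e ∈ H, ∃ u ∈ e, ∃ v ∈ e, c u ≠ c v)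
    (hcov : ∀ X : Finset V, X.card < k →
      ∃ Y : Finset V, Y.card = k ∧ Disjoint X Y ∧ ∀ e ∈ H, (e ∩ Y).Nonempty)
    (X : Finset V) (i : ℕ) (hi : X.card + i ≤ k) :
    ∃ Xi : Finset V, X ⊆ Xi ∧ Xi.card = X.card + i ∧
      ((H.filter fun e => Xi ⊆ e).card : ℝ)
        ≥ ((H.filter fun e => X ⊆ e).card : ℝ) / (k : ℝ) ^ i := by
  induction i with
  | zero => exact ⟨X, subset_rfl, by simp, by simp⟩
  | succ i ih =>
    obtain ⟨Xi, hXsub, hcard, hineq⟩ := ih (by omega)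
    have hklt : Xi.card < k := by omega
    have hk : 0 < k := by omega
    obtain ⟨Y, hYcard, hdisj, hYmeet⟩ := hcov Xi hklt
    have hYne : Y.Nonempty := by rw [← card_pos, hYcard]; exact hk
    have key : ∃ y ∈ Y, (H.filter fun e => Xi ⊆ e).card
        ≤ k * (H.filter fun e => insert y Xi ⊆ e).card := by
      by_contra h
      push_neg at h
      have hsub : (H.filter fun e => Xi ⊆ e)
          ⊆ Y.biUnion (fun y => H.filter fun e => insert y Xi ⊆ e) := by
        intro e he
        rw [mem_filter] at he
        obtain ⟨y, hy⟩ := hYmeet e he.1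
        rw [mem_inter] at hy
        exact mem_biUnion.2 ⟨y, hy.2, mem_filter.2 ⟨he.1, insert_subset hy.1 he.2⟩⟩
      have h1 : (H.filter fun e => Xi ⊆ e).card
          ≤ ∑ y ∈ Y, (H.filter fun e => insert y Xi ⊆ e).card :=
        le_trans (card_le_card hsub) (card_biUnion_le)
      have h2 : ∀ y ∈ Y, k * (H.filter fun e => insert y Xi ⊆ e).card + 1
          ≤ (H.filter fun e => Xi ⊆ e).card := fun y hy => h y hy
      have h3 : k * ∑ y ∈ Y, (H.filter fun e => insert y Xi ⊆ e).card
          ≤ k * ((H.filter fun e => Xi ⊆ e).card - 1) := by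
        rw [mul_sum]
        calc ∑ y ∈ Y, k * (H.filter fun e => insert y Xi ⊆ e).card
            ≤ ∑ y ∈ Y, ((H.filter fun e => Xi ⊆ e).card - 1) := by
              refine sum_le_sum fun y hy => ?_
              have := h2 y hy; omega
          _ = k * ((H.filter fun e => Xi ⊆ e).card - 1) := by
              rw [sum_const, hYcard, smul_eq_mul]
      have hcpos : 0 < (H.filter fun e => Xi ⊆ e).card := by
        have := h2 _ hYne.choose_spec; omega
      have := Nat.le_of_mul_le_mul_left h3 hk
      omega
    obtain ⟨y, hyY, hkey⟩ := key
    have hyXi : y ∉ Xi := fun hy => (disjoint_left.1 hdisj hy) hyY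
    refine ⟨insert y Xi, hXsub.trans (subset_insert _ _),
      by rw [card_insert_of_notMem hyXi, hcard]; ring, ?_⟩
    have hkR : (0:ℝ) < k := by exact_mod_cast hk
    have h4 : ((H.filter fun e => Xi ⊆ e).card : ℝ)
        ≤ k * ((H.filter fun e => insert y Xi ⊆ e).card : ℝ) := by
      exact_mod_cast hkey
    rw [ge_iff_le, pow_succ, div_le_iff₀ (by positivity)]
    rw [ge_iff_le, div_le_iff₀ (by positivity)] at hineq
    calc ((H.filter fun e => X ⊆ e).card : ℝ)
        ≤ ((H.filter fun e => Xi ⊆ e).card : ℝ) * k ^ i := hineq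
      _ ≤ (k * ((H.filter fun e => insert y Xi ⊆ e).card : ℝ)) * k ^ i := by
          apply mul_le_mul_of_nonneg_right h4 (by positivity)
      _ = ((H.filter fun e => insert y Xi ⊆ e).card : ℝ) * (k ^ i * k) := by ring
end

section
/- Let d > 0 and let t ≤ n be positive integers. Let G be a graph with m > 4 t d^{−t} n vertices and at least d m²/2 edges. Then there is a vertex subset U of G with |U| > 2n such that the proportion of t-element subsets of U having fewer than n common neighbors in G is less than (2t)^{−t}. -/
open Finset

private lemma drc_filter_eq {V : Type*} [Fintype V] [DecidableEq V] (t : ℕ) (B : Finset V) :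
    (Finset.univ.filter fun T : Fin t → V => ∀ i, T i ∈ B).card = B.card ^ t := by
  have h : (Finset.univ.filter fun T : Fin t → V => ∀ i, T i ∈ B)
      = Fintype.piFinset fun _ : Fin t => B := by
    ext T
    simp [Fintype.mem_piFinset]
  rw [h, Fintype.card_piFinset_const]

private lemma drc_sumA {V : Type*} [Fintype V] [DecidableEq V] (G : SimpleGraph V)
    [DecidableRel G.Adj] (t : ℕ) :
    ∑ T : Fin t → V, (Finset.univ.filter fun v => ∀ i, G.Adj v (T i)).card
      = ∑ v : V, G.degree v ^ t := by
  simp_rw [Finset.card_filter]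
  rw [Finset.sum_comm]
  refine Finset.sum_congr rfl fun v _ => ?_
  rw [← Finset.card_filter]
  have h : (Finset.univ.filter fun T : Fin t → V => ∀ i, G.Adj v (T i))
      = Finset.univ.filter fun T : Fin t → V => ∀ i, T i ∈ G.neighborFinset v := by
    simp [SimpleGraph.mem_neighborFinset]
  rw [h, drc_filter_eq]
  rfl

private lemma drc_sumB {V : Type*} [Fintype V] [DecidableEq V] (G : SimpleGraph V)
    [DecidableRel G.Adj] (t n : ℕ) :
    ∑ T : Fin t → V,
        (((Finset.univ.filter fun v => ∀ i, G.Adj v (T i)).powersetCard t).filter fun S =>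
          (Finset.univ.filter fun v => ∀ u ∈ S, G.Adj v u).card < n).card
      = ∑ S ∈ (Finset.univ.powersetCard t).filter (fun S =>
          (Finset.univ.filter fun v => ∀ u ∈ S, G.Adj v u).card < n),
          (Finset.univ.filter fun v => ∀ u ∈ S, G.Adj v u).card ^ t := by
  have hiff : ∀ (S : Finset V) (T : Fin t → V),
      (S ⊆ Finset.univ.filter fun v => ∀ i, G.Adj v (T i)) ↔
      (∀ i, T i ∈ Finset.univ.filter fun v => ∀ u ∈ S, G.Adj v u) := by
    intro S T
    simp only [Finset.subset_iff, Finset.mem_filter, Finset.mem_univ, true_and]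
    exact ⟨fun h i u hu => ((h hu) i).symm, fun h s hs i => ((h i) s hs).symm⟩
  have h1 : ∀ T : Fin t → V,
      ((Finset.univ.filter fun v => ∀ i, G.Adj v (T i)).powersetCard t).filter (fun S =>
          (Finset.univ.filter fun v => ∀ u ∈ S, G.Adj v u).card < n)
      = ((Finset.univ.powersetCard t).filter (fun S =>
          (Finset.univ.filter fun v => ∀ u ∈ S, G.Adj v u).card < n)).filter
          (fun S => ∀ i, T i ∈ Finset.univ.filter fun v => ∀ u ∈ S, G.Adj v u) := by
    intro T
    ext S
    constructor
    · intro hS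
      have h' := Finset.mem_filter.1 hS
      have h'' := Finset.mem_powersetCard.1 h'.1
      exact Finset.mem_filter.2 ⟨Finset.mem_filter.2 ⟨Finset.mem_powersetCard.2
        ⟨Finset.subset_univ S, h''.2⟩, h'.2⟩, (hiff S T).1 h''.1⟩
    · intro hS
      have h' := Finset.mem_filter.1 hS
      have h'' := Finset.mem_filter.1 h'.1
      have h3 := Finset.mem_powersetCard.1 h''.1
      exact Finset.mem_filter.2 ⟨Finset.mem_powersetCard.2 ⟨(hiff S T).2 h'.2, h3.2⟩, h''.2⟩
  simp_rw [h1]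
  calc ∑ T : Fin t → V, (((Finset.univ.powersetCard t).filter (fun S =>
          (Finset.univ.filter fun v => ∀ u ∈ S, G.Adj v u).card < n)).filter
          (fun S => ∀ i, T i ∈ Finset.univ.filter fun v => ∀ u ∈ S, G.Adj v u)).card
      = ∑ T : Fin t → V, ∑ S ∈ (Finset.univ.powersetCard t).filter (fun S =>
          (Finset.univ.filter fun v => ∀ u ∈ S, G.Adj v u).card < n),
          (if ∀ i, T i ∈ Finset.univ.filter fun v => ∀ u ∈ S, G.Adj v u then 1 else 0) := by
        refine Finset.sum_congr rfl fun T _ => ?_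
        rw [Finset.card_filter]
    _ = ∑ S ∈ (Finset.univ.powersetCard t).filter (fun S =>
          (Finset.univ.filter fun v => ∀ u ∈ S, G.Adj v u).card < n),
          ∑ T : Fin t → V,
          (if ∀ i, T i ∈ Finset.univ.filter fun v => ∀ u ∈ S, G.Adj v u then 1 else 0) :=
        Finset.sum_comm
    _ = ∑ S ∈ (Finset.univ.powersetCard t).filter (fun S =>
          (Finset.univ.filter fun v => ∀ u ∈ S, G.Adj v u).card < n),
          (Finset.univ.filter fun v => ∀ u ∈ S, G.Adj v u).card ^ t := by
        refine Finset.sum_congr rfl fun S _ => ?_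
        rw [← Finset.card_filter, drc_filter_eq]

private lemma drc_bern (t : ℕ) (ht : 0 < t) {z : ℝ} (hz : 0 ≤ z) :
    ((t : ℕ) : ℝ) ^ t * z ≤ (((t : ℕ) : ℝ) - 1 + z) ^ t := by
  have htR : (0 : ℝ) < t := by exact_mod_cast ht
  have hb : -2 ≤ (z - 1) / (t : ℝ) := by
    have ht1 : (1 : ℝ) ≤ t := by exact_mod_cast ht
    rw [le_div_iff₀ htR]
    nlinarith
  have h := one_add_mul_le_pow hb t
  have e1 : 1 + (t : ℝ) * ((z - 1) / t) = z := by field_simp; ring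
  have e2 : (1 + (z - 1) / (t : ℝ)) = ((t : ℝ) - 1 + z) / t := by
    field_simp
    ring
  rw [e1, e2] at h
  calc ((t : ℕ) : ℝ) ^ t * z ≤ (t : ℝ) ^ t * ((((t : ℝ) - 1 + z) / t) ^ t) := by
        exact mul_le_mul_of_nonneg_left h (by positivity)
    _ = (((t : ℕ) : ℝ) - 1 + z) ^ t := by
        rw [div_pow, mul_div_cancel₀]
        positivity

private lemma drc_amgm (t' : ℕ) {a y : ℝ} (ha : 0 ≤ a) (hat : t' ≠ 0 → 1 ≤ a) (hy : 0 ≤ y) :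
    (2 * ((t' + 1 : ℕ) : ℝ)) ^ (t' + 1) * ((t' + 1).factorial : ℝ) * y
      ≤ (2 * a * (t' : ℝ) + (2 * ((t' + 1).factorial : ℝ) / a ^ t') * y) ^ (t' + 1) := by
  rcases Nat.eq_zero_or_pos t' with rfl | ht'
  · norm_num [Nat.factorial]
  · have ha1 : 1 ≤ a := hat (by omega)
    have hap : (0 : ℝ) < a := by linarith
    set z : ℝ := ((t' + 1).factorial : ℝ) * y / a ^ (t' + 1) with hz
    have hz0 : 0 ≤ z := div_nonneg (mul_nonneg (by positivity) hy) (by positivity)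
    have hb := drc_bern (t' + 1) (Nat.succ_pos t') hz0
    have h2 := mul_le_mul_of_nonneg_left hb
      (le_of_lt (pow_pos (by linarith : (0 : ℝ) < 2 * a) (t' + 1)))
    calc (2 * ((t' + 1 : ℕ) : ℝ)) ^ (t' + 1) * ((t' + 1).factorial : ℝ) * y
        = (2 * a) ^ (t' + 1) * (((t' + 1 : ℕ) : ℝ) ^ (t' + 1) * z) := by
          rw [hz, mul_pow, mul_pow]; field_simp
      _ ≤ (2 * a) ^ (t' + 1) * ((((t' + 1 : ℕ) : ℝ) - 1 + z) ^ (t' + 1)) := h2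
      _ = (2 * a * (t' : ℝ) + (2 * ((t' + 1).factorial : ℝ) / a ^ t') * y) ^ (t' + 1) := by
          rw [hz, ← mul_pow]
          congr 1
          have hc : ((t' + 1 : ℕ) : ℝ) - 1 = (t' : ℝ) := by push_cast; ring
          rw [hc]
          field_simp
          ring

set_option maxHeartbeats 1000000 in
/-- Dependent random choice (Lemma 2.5). If `d > 0`, `t ≤ n` are positive integers, and `G`
is a graph with `m > 4 t d^{-t} n` vertices and at least `d m² / 2` edges, then there is a
vertex subset `U` with `|U| > 2n` such that the proportion of `t`-element subsets of `U`
having fewer than `n` common neighbors is less than `(2t)^{-t}`. -/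
theorem stmt_8 {V : Type*} [Fintype V] [DecidableEq V]
    (G : SimpleGraph V) [DecidableRel G.Adj]
    (d : ℝ) (t n : ℕ) (hd : 0 < d) (ht : 0 < t) (htn : t ≤ n)
    (hm : (Fintype.card V : ℝ) > 4 * t * d⁻¹ ^ t * n)
    (he : (G.edgeFinset.card : ℝ) ≥ d * (Fintype.card V : ℝ) ^ 2 / 2) :
    ∃ U : Finset V, (U.card : ℝ) > 2 * n ∧
      (((U.powersetCard t).filter fun S =>
          (Finset.univ.filter fun v => ∀ u ∈ S, G.Adj v u).card < n).card : ℝ)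
        < ((2 * t : ℝ))⁻¹ ^ t * ((U.powersetCard t).card : ℝ) := by
  classical
  obtain ⟨t', rfl⟩ : ∃ t', t = t' + 1 := ⟨t - 1, by omega⟩
  set m := Fintype.card V with hmdef
  have hn : 0 < n := ht.trans_le htn
  have hnR : (1 : ℝ) ≤ n := by exact_mod_cast hn
  have htR : (0 : ℝ) < ((t' + 1 : ℕ) : ℝ) := by exact_mod_cast Nat.succ_pos t'
  have hd_t : (0 : ℝ) < d ^ (t' + 1) := pow_pos hd _
  have hn0R : (0 : ℝ) < (n : ℝ) := by exact_mod_cast hn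
  have h4 : (0 : ℝ) < 4 * ((t' + 1 : ℕ) : ℝ) * d⁻¹ ^ (t' + 1) * n := by
    have h1 : (0 : ℝ) < d⁻¹ ^ (t' + 1) := pow_pos (inv_pos.2 hd) _
    exact mul_pos (mul_pos (mul_pos (by norm_num) htR) h1) hn0R
  have hmR : (0 : ℝ) < m := h4.trans hm
  have hm0 : 0 < m := by exact_mod_cast hmR
  -- d^t m > 4 t n
  have hdd : d ^ (t' + 1) * d⁻¹ ^ (t' + 1) = 1 := by
    rw [← mul_pow, mul_inv_cancel₀ hd.ne', one_pow]
  have hdm : 4 * ((t' + 1 : ℕ) : ℝ) * n < d ^ (t' + 1) * m := by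
    have h5 := (mul_lt_mul_iff_right₀ hd_t).2 hm
    have key : d ^ (t' + 1) * (4 * ((t' + 1 : ℕ) : ℝ) * d⁻¹ ^ (t' + 1) * n)
        = 4 * ((t' + 1 : ℕ) : ℝ) * n := by
      rw [show d ^ (t' + 1) * (4 * ((t' + 1 : ℕ) : ℝ) * d⁻¹ ^ (t' + 1) * ↑n)
          = (d ^ (t' + 1) * d⁻¹ ^ (t' + 1)) * (4 * ((t' + 1 : ℕ) : ℝ) * ↑n) from by ring,
        hdd, one_mul]
    rw [key] at h5
    exact h5
  -- lower bound on ∑ |U T|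
  have hedeg : (∑ v : V, (G.degree v : ℝ)) = 2 * G.edgeFinset.card := by
    exact_mod_cast G.sum_degrees_eq_twice_card_edges
  have hSdeg : d * (m : ℝ) ^ 2 ≤ ∑ v : V, (G.degree v : ℝ) := by
    rw [hedeg]; linarith
  have jensen := pow_sum_div_card_le_sum_pow (s := (Finset.univ : Finset V))
    (f := fun v => (G.degree v : ℝ)) (fun i _ => by positivity) t'
  rw [Finset.card_univ] at jensen
  have hSX : d ^ (t' + 1) * (m : ℝ) ^ (t' + 2) ≤ ∑ v : V, (G.degree v : ℝ) ^ (t' + 1) := by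
    refine le_trans ?_ jensen
    rw [le_div_iff₀ (by positivity)]
    calc d ^ (t' + 1) * (m : ℝ) ^ (t' + 2) * (m : ℝ) ^ t' = (d * (m : ℝ) ^ 2) ^ (t' + 1) := by
          ring
      _ ≤ (∑ v : V, (G.degree v : ℝ)) ^ (t' + 1) :=
          pow_le_pow_left₀ (by positivity) hSdeg _
  have hsumA : (∑ T : Fin (t' + 1) → V,
      ((Finset.univ.filter fun v => ∀ i, G.Adj v (T i)).card : ℝ))
      = ∑ v : V, (G.degree v : ℝ) ^ (t' + 1) := by
    have h := congrArg (fun k : ℕ => (k : ℝ)) (drc_sumA G (t' + 1))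
    push_cast at h
    exact h
  -- upper bound on ∑ Y T
  have hYnat : (∑ T : Fin (t' + 1) → V,
      (((Finset.univ.filter fun v => ∀ i, G.Adj v (T i)).powersetCard (t' + 1)).filter fun S =>
        (Finset.univ.filter fun v => ∀ u ∈ S, G.Adj v u).card < n).card)
      ≤ m.choose (t' + 1) * (n - 1) ^ (t' + 1) := by
    rw [drc_sumB G (t' + 1) n]
    calc ∑ S ∈ (Finset.univ.powersetCard (t' + 1)).filter (fun S =>
            (Finset.univ.filter fun v => ∀ u ∈ S, G.Adj v u).card < n),
            (Finset.univ.filter fun v => ∀ u ∈ S, G.Adj v u).card ^ (t' + 1)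
        ≤ ∑ S ∈ (Finset.univ.powersetCard (t' + 1)).filter (fun S =>
            (Finset.univ.filter fun v => ∀ u ∈ S, G.Adj v u).card < n), (n - 1) ^ (t' + 1) := by
          refine Finset.sum_le_sum fun S hS => Nat.pow_le_pow_left ?_ _
          have := (Finset.mem_filter.1 hS).2
          omega
      _ = ((Finset.univ.powersetCard (t' + 1)).filter (fun S =>
            (Finset.univ.filter fun v => ∀ u ∈ S, G.Adj v u).card < n)).card
            * (n - 1) ^ (t' + 1) := by rw [Finset.sum_const, smul_eq_mul]
      _ ≤ m.choose (t' + 1) * (n - 1) ^ (t' + 1) := by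
          refine Nat.mul_le_mul_right _ ?_
          calc ((Finset.univ.powersetCard (t' + 1)).filter _).card
              ≤ (Finset.univ.powersetCard (t' + 1) : Finset (Finset V)).card :=
                Finset.card_filter_le _ _
            _ = m.choose (t' + 1) := by rw [Finset.card_powersetCard, Finset.card_univ]
  set a : ℝ := (n : ℝ) - 1 with hadef
  have ha : 0 ≤ a := by rw [hadef]; linarith
  set K : ℝ := 2 * ((t' + 1).factorial : ℝ) / a ^ t' with hKdef
  have hK : 0 ≤ K := div_nonneg (by positivity) (pow_nonneg ha _)
  have hSY : (∑ T : Fin (t' + 1) → V,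
      ((((Finset.univ.filter fun v => ∀ i, G.Adj v (T i)).powersetCard (t' + 1)).filter fun S =>
        (Finset.univ.filter fun v => ∀ u ∈ S, G.Adj v u).card < n).card : ℝ))
      ≤ (m.choose (t' + 1) : ℝ) * a ^ (t' + 1) := by
    have h := hYnat
    have h2 : ((∑ T : Fin (t' + 1) → V,
        (((Finset.univ.filter fun v => ∀ i, G.Adj v (T i)).powersetCard (t' + 1)).filter fun S =>
          (Finset.univ.filter fun v => ∀ u ∈ S, G.Adj v u).card < n).card : ℕ) : ℝ)
        ≤ ((m.choose (t' + 1) * (n - 1) ^ (t' + 1) : ℕ) : ℝ) := by exact_mod_cast h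
    push_cast [Nat.cast_sub hn] at h2
    rw [hadef]
    exact h2
  -- K * (choose * a^t) ≤ 2 a m^t
  have hKbound : K * ((m.choose (t' + 1) : ℝ) * a ^ (t' + 1)) ≤ 2 * a * (m : ℝ) ^ (t' + 1) := by
    rcases ha.eq_or_lt with h0 | hapos
    · rw [← h0]
      simp
    · have hfc : ((t' + 1).factorial : ℝ) * (m.choose (t' + 1)) ≤ (m : ℝ) ^ (t' + 1) := by
        have := Nat.descFactorial_le_pow m (t' + 1)
        rw [Nat.descFactorial_eq_factorial_mul_choose] at this
        exact_mod_cast this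
      have hKe : K * ((m.choose (t' + 1) : ℝ) * a ^ (t' + 1))
          = 2 * a * (((t' + 1).factorial : ℝ) * (m.choose (t' + 1))) := by
        rw [hKdef]
        field_simp
        ring
      rw [hKe]
      exact mul_le_mul_of_nonneg_left hfc (by positivity)
  -- arithmetic comparison
  have harith : (2 * (n : ℝ) + 2 * a * t' + 2 * a) ≤ 4 * ((t' + 1 : ℕ) : ℝ) * n := by
    rw [hadef]
    have ht'R : (0 : ℝ) ≤ (t' : ℝ) := Nat.cast_nonneg t'
    push_cast
    nlinarith [mul_nonneg ht'R (by linarith : (0 : ℝ) ≤ (n : ℝ) - 1)]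
  -- the averaged quantity
  have hsum : (2 * (n : ℝ) + 2 * a * t') * (m : ℝ) ^ (t' + 1)
      < ∑ T : Fin (t' + 1) → V,
        (((Finset.univ.filter fun v => ∀ i, G.Adj v (T i)).card : ℝ)
          - K * ((((Finset.univ.filter fun v => ∀ i, G.Adj v (T i)).powersetCard
              (t' + 1)).filter fun S =>
            (Finset.univ.filter fun v => ∀ u ∈ S, G.Adj v u).card < n).card : ℝ)) := by
    rw [Finset.sum_sub_distrib, ← Finset.mul_sum, hsumA]
    have h6 : K * (∑ T : Fin (t' + 1) → V,
        ((((Finset.univ.filter fun v => ∀ i, G.Adj v (T i)).powersetCard (t' + 1)).filter fun S =>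
          (Finset.univ.filter fun v => ∀ u ∈ S, G.Adj v u).card < n).card : ℝ))
        ≤ 2 * a * (m : ℝ) ^ (t' + 1) :=
      le_trans (mul_le_mul_of_nonneg_left hSY hK) hKbound
    have h7 : (4 * ((t' + 1 : ℕ) : ℝ) * n) * (m : ℝ) ^ (t' + 1)
        < (d ^ (t' + 1) * m) * (m : ℝ) ^ (t' + 1) :=
      mul_lt_mul_of_pos_right hdm (pow_pos hmR _)
    have h8 : d ^ (t' + 1) * (m : ℝ) * (m : ℝ) ^ (t' + 1) = d ^ (t' + 1) * (m : ℝ) ^ (t' + 2) := by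
      ring
    have h9 := mul_le_mul_of_nonneg_right harith (le_of_lt (pow_pos hmR (t' + 1)))
    linarith [hSX]
  -- choose a good T
  have hex : ∃ T : Fin (t' + 1) → V, (2 * (n : ℝ) + 2 * a * t')
      < ((Finset.univ.filter fun v => ∀ i, G.Adj v (T i)).card : ℝ)
        - K * ((((Finset.univ.filter fun v => ∀ i, G.Adj v (T i)).powersetCard
            (t' + 1)).filter fun S =>
          (Finset.univ.filter fun v => ∀ u ∈ S, G.Adj v u).card < n).card : ℝ) := by
    by_contra hcon
    push_neg at hcon
    have hle := Finset.sum_le_sum fun (T : Fin (t' + 1) → V) (_ : T ∈ Finset.univ) => hcon T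
    rw [Finset.sum_const, Finset.card_univ] at hle
    have hcard : Fintype.card (Fin (t' + 1) → V) = m ^ (t' + 1) := by
      rw [Fintype.card_fun, Fintype.card_fin]
    rw [hcard, nsmul_eq_mul] at hle
    push_cast at hle
    nlinarith [hsum]
  obtain ⟨T, hT⟩ := hex
  refine ⟨Finset.univ.filter fun v => ∀ i, G.Adj v (T i), ?_, ?_⟩
  · have h1 : 0 ≤ K * ((((Finset.univ.filter fun v => ∀ i, G.Adj v (T i)).powersetCard
        (t' + 1)).filter fun S =>
        (Finset.univ.filter fun v => ∀ u ∈ S, G.Adj v u).card < n).card : ℝ) :=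
      mul_nonneg hK (Nat.cast_nonneg _)
    have h2 : 0 ≤ 2 * a * (t' : ℝ) :=
      mul_nonneg (by linarith) (Nat.cast_nonneg t')
    linarith
  · -- the proportion bound
    rw [Finset.card_powersetCard]
    set Xn : ℕ := (Finset.univ.filter fun v => ∀ i, G.Adj v (T i)).card with hXdef
    set Yn : ℕ := (((Finset.univ.filter fun v => ∀ i, G.Adj v (T i)).powersetCard
        (t' + 1)).filter fun S =>
        (Finset.univ.filter fun v => ∀ u ∈ S, G.Adj v u).card < n).card with hYdef
    clear_value Xn Yn
    have hKY : 0 ≤ K * (Yn : ℝ) := mul_nonneg hK (Nat.cast_nonneg _)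
    have hat' : 0 ≤ 2 * a * (t' : ℝ) := mul_nonneg (by linarith) (Nat.cast_nonneg t')
    have hXgtR : 2 * (n : ℝ) < (Xn : ℝ) := by linarith
    have hXgt : 2 * n < Xn := by exact_mod_cast hXgtR
    have hXt : t' + 1 ≤ Xn :=
      le_trans (le_trans htn (Nat.le_mul_of_pos_left n (by norm_num))) (le_of_lt hXgt)
    have hstep : 2 * a * (t' : ℝ) + K * (Yn : ℝ) < (Xn : ℝ) - 2 * n := by linarith
    have h1 : (2 * ((t' + 1 : ℕ) : ℝ)) ^ (t' + 1) * ((t' + 1).factorial : ℝ) * (Yn : ℝ)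
        ≤ (2 * a * (t' : ℝ) + K * (Yn : ℝ)) ^ (t' + 1) := by
      have hat : t' ≠ 0 → 1 ≤ a := by
        intro h
        rw [hadef]
        have h2n : 2 ≤ n := le_trans (Nat.succ_le_succ (Nat.one_le_iff_ne_zero.2 h)) htn
        have : (2 : ℝ) ≤ n := by exact_mod_cast h2n
        linarith
      have := drc_amgm t' ha hat (Nat.cast_nonneg Yn)
      rw [← hKdef] at this
      exact this
    have h2 : (2 * a * (t' : ℝ) + K * (Yn : ℝ)) ^ (t' + 1) < ((Xn : ℝ) - 2 * n) ^ (t' + 1) :=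
      pow_lt_pow_left₀ hstep (by linarith) (Nat.succ_ne_zero t')
    have hcast : ((Xn - (t' + 1) + 1 : ℕ) : ℝ) = (Xn : ℝ) - ((t' + 1 : ℕ) : ℝ) + 1 := by
      push_cast [Nat.cast_sub hXt]
      ring
    have h3 : ((Xn : ℝ) - 2 * n) ^ (t' + 1) ≤ ((Xn - (t' + 1) + 1 : ℕ) : ℝ) ^ (t' + 1) := by
      refine pow_le_pow_left₀ (by linarith) ?_ _
      rw [hcast]
      have : ((t' + 1 : ℕ) : ℝ) ≤ n := by exact_mod_cast htn
      linarith
    have h4 : ((Xn - (t' + 1) + 1 : ℕ) : ℝ) ^ (t' + 1)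
        ≤ ((t' + 1).factorial : ℝ) * (Xn.choose (t' + 1) : ℝ) := by
      have h5 := Nat.pow_sub_le_descFactorial Xn (t' + 1)
      rw [Nat.sub_add_comm hXt, Nat.descFactorial_eq_factorial_mul_choose] at h5
      exact_mod_cast h5
    have hfac : (0 : ℝ) < ((t' + 1).factorial : ℝ) := by
      exact_mod_cast (t' + 1).factorial_pos
    have hmain : (2 * ((t' + 1 : ℕ) : ℝ)) ^ (t' + 1) * (Yn : ℝ) < (Xn.choose (t' + 1) : ℝ) := by
      nlinarith [h1, h2, h3, h4]
    rw [inv_pow, inv_mul_eq_div, lt_div_iff₀ (by positivity)]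
    calc (Yn : ℝ) * (2 * ((t' + 1 : ℕ) : ℝ)) ^ (t' + 1)
        = (2 * ((t' + 1 : ℕ) : ℝ)) ^ (t' + 1) * (Yn : ℝ) := by ring
      _ < (Xn.choose (t' + 1) : ℝ) := hmain
end

section
/- Let H be a k-uniform hypergraph with k ≥ 4, let t ≥ 3, and suppose X and Y' are disjoint collections of edges of H with |X| = |Y'| = t such that every pair of distinct edges of X intersects in at most λ vertices and every edge of X intersects every edge of Y' in at least λ vertices. Then the average pairwise intersection size within Y' satisfies λ_{Y'} ≥ λ − 2k/(t−1). -/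
open Finset

lemma sum_inter_prod {V : Type*} [Fintype V] [DecidableEq V] (S T : Finset (Finset V)) :
    ∑ p ∈ S ×ˢ T, (p.1 ∩ p.2).card
      = ∑ v : V, (S.filter (fun e => v ∈ e)).card * (T.filter (fun e => v ∈ e)).card := by
  have h1 : ∀ e f : Finset V, (e ∩ f).card = ∑ v : V, if v ∈ e ∧ v ∈ f then 1 else 0 := by
    intro e f
    rw [← Finset.card_filter]
    congr 1
    ext v
    simp [Finset.mem_inter]
  calc ∑ p ∈ S ×ˢ T, (p.1 ∩ p.2).card
      = ∑ p ∈ S ×ˢ T, ∑ v : V, if v ∈ p.1 ∧ v ∈ p.2 then 1 else 0 := by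
        exact Finset.sum_congr rfl fun p _ => h1 p.1 p.2
    _ = ∑ v : V, ∑ p ∈ S ×ˢ T, if v ∈ p.1 ∧ v ∈ p.2 then 1 else 0 := Finset.sum_comm
    _ = _ := by
        refine Finset.sum_congr rfl fun v _ => ?_
        rw [← Finset.card_filter,
          Finset.filter_product (fun e : Finset V => v ∈ e) (fun e : Finset V => v ∈ e),
          Finset.card_product]

/-- Second claim in the proof of the main theorem: if `X` and `Y'` are disjoint `t`-sets of
edges of a `k`-uniform hypergraph such that all pairwise intersections within `X` have size
at most `λ` and every edge of `X` meets every edge of `Y'` in at least `λ` vertices, then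
the average pairwise intersection size within `Y'` is at least `λ − 2k/(t−1)`. -/
theorem stmt_9 {V : Type*} [Fintype V] [DecidableEq V]
    (H : Finset (Finset V)) (k t lam : ℕ) (hk : 4 ≤ k) (ht : 3 ≤ t)
    (hunif : ∀ e ∈ H, e.card = k)
    (X Y' : Finset (Finset V)) (hXH : X ⊆ H) (hYH : Y' ⊆ H) (hdisj : Disjoint X Y')
    (hX : X.card = t) (hY : Y'.card = t)
    (hXsmall : ∀ e ∈ X, ∀ f ∈ X, e ≠ f → (e ∩ f).card ≤ lam)
    (hcross : ∀ e ∈ X, ∀ f ∈ Y', lam ≤ (e ∩ f).card) :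
    (∑ p ∈ Y'.offDiag, ((p.1 ∩ p.2).card : ℝ)) / (t * (t - 1))
      ≥ (lam : ℝ) - 2 * k / (t - 1) := by
  classical
  set a : V → ℕ := fun v => (X.filter (fun e => v ∈ e)).card with ha
  set b : V → ℕ := fun v => (Y'.filter (fun e => v ∈ e)).card with hb
  -- splitting products into diagonal + off-diagonal
  have split : ∀ S : Finset (Finset V), S ⊆ H → S.card = t →
      ∑ p ∈ S ×ˢ S, (p.1 ∩ p.2).card = t * k + ∑ p ∈ S.offDiag, (p.1 ∩ p.2).card := by
    intro S hSH hS
    rw [← Finset.diag_union_offDiag S,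
      Finset.sum_union (Finset.disjoint_diag_offDiag S), Finset.sum_diag]
    congr 1
    calc ∑ e ∈ S, (e ∩ e).card = ∑ e ∈ S, k := by
          refine Finset.sum_congr rfl fun e he => ?_
          rw [Finset.inter_self]; exact hunif e (hSH he)
      _ = t * k := by rw [Finset.sum_const, hS, smul_eq_mul]
  have splitX := split X hXH hX
  have splitY := split Y' hYH hY
  -- bound on A
  have hA : ∑ p ∈ X.offDiag, (p.1 ∩ p.2).card ≤ (t * t - t) * lam := by
    calc ∑ p ∈ X.offDiag, (p.1 ∩ p.2).card ≤ ∑ p ∈ X.offDiag, lam := by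
          refine Finset.sum_le_sum fun p hp => ?_
          rw [Finset.mem_offDiag] at hp
          exact hXsmall p.1 hp.1 p.2 hp.2.1 hp.2.2
      _ = (t * t - t) * lam := by
          rw [Finset.sum_const, smul_eq_mul, Finset.offDiag_card, hX]
  -- bound on C
  have hC : t * t * lam ≤ ∑ p ∈ X ×ˢ Y', (p.1 ∩ p.2).card := by
    calc t * t * lam = ∑ p ∈ X ×ˢ Y', lam := by
          rw [Finset.sum_const, smul_eq_mul, Finset.card_product, hX, hY]
      _ ≤ _ := by
          refine Finset.sum_le_sum fun p hp => ?_
          rw [Finset.mem_product] at hp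
          exact hcross p.1 hp.1 p.2 hp.2
  -- the Cauchy–Schwarz-type inequality over ℝ
  have hsq : (2 : ℝ) * ∑ v : V, (a v : ℝ) * (b v : ℝ)
      ≤ (∑ v : V, (a v : ℝ) * (a v : ℝ)) + ∑ v : V, (b v : ℝ) * (b v : ℝ) := by
    rw [Finset.mul_sum, ← Finset.sum_add_distrib]
    refine Finset.sum_le_sum fun v _ => ?_
    nlinarith [sq_nonneg ((a v : ℝ) - (b v : ℝ))]
  -- cast the key identities
  have keyXY : ((∑ p ∈ X ×ˢ Y', (p.1 ∩ p.2).card : ℕ) : ℝ)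
      = ∑ v : V, (a v : ℝ) * (b v : ℝ) := by
    rw [sum_inter_prod]; push_cast; rfl
  have keyXX : ((∑ p ∈ X ×ˢ X, (p.1 ∩ p.2).card : ℕ) : ℝ)
      = ∑ v : V, (a v : ℝ) * (a v : ℝ) := by
    rw [sum_inter_prod]; push_cast; rfl
  have keyYY : ((∑ p ∈ Y' ×ˢ Y', (p.1 ∩ p.2).card : ℕ) : ℝ)
      = ∑ v : V, (b v : ℝ) * (b v : ℝ) := by
    rw [sum_inter_prod]; push_cast; rfl
  have h1 : 2 * ((∑ p ∈ X ×ˢ Y', (p.1 ∩ p.2).card : ℕ) : ℝ)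
      ≤ ((∑ p ∈ X ×ˢ X, (p.1 ∩ p.2).card : ℕ) : ℝ)
        + ((∑ p ∈ Y' ×ˢ Y', (p.1 ∩ p.2).card : ℕ) : ℝ) := by
    rw [keyXY, keyXX, keyYY]; exact hsq
  have h2 : ((∑ p ∈ X ×ˢ X, (p.1 ∩ p.2).card : ℕ) : ℝ)
      = (t : ℝ) * k + ((∑ p ∈ X.offDiag, (p.1 ∩ p.2).card : ℕ) : ℝ) := by
    rw [splitX]; push_cast; ring
  have h3 : ((∑ p ∈ Y' ×ˢ Y', (p.1 ∩ p.2).card : ℕ) : ℝ)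
      = (t : ℝ) * k + ((∑ p ∈ Y'.offDiag, (p.1 ∩ p.2).card : ℕ) : ℝ) := by
    rw [splitY]; push_cast; ring
  have hAR : ((∑ p ∈ X.offDiag, (p.1 ∩ p.2).card : ℕ) : ℝ) ≤ ((t : ℝ) * t - t) * lam := by
    calc ((∑ p ∈ X.offDiag, (p.1 ∩ p.2).card : ℕ) : ℝ) ≤ (((t * t - t) * lam : ℕ) : ℝ) := by
          exact_mod_cast hA
      _ = ((t : ℝ) * t - t) * lam := by
          have h : t ≤ t * t := Nat.le_mul_of_pos_left t (by omega)
          push_cast [Nat.cast_sub h]; ring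
  have hCR : (t : ℝ) * t * lam ≤ ((∑ p ∈ X ×ˢ Y', (p.1 ∩ p.2).card : ℕ) : ℝ) := by
    exact_mod_cast hC
  have hBgoal : (∑ p ∈ Y'.offDiag, ((p.1 ∩ p.2).card : ℝ))
      = ((∑ p ∈ Y'.offDiag, (p.1 ∩ p.2).card : ℕ) : ℝ) := by
    push_cast; rfl
  rw [hBgoal, ge_iff_le]
  have ht1 : (1 : ℝ) ≤ (t : ℝ) - 1 := by
    have h3' : (3 : ℝ) ≤ (t : ℝ) := by exact_mod_cast ht
    linarith
  have htpos : (0 : ℝ) < (t : ℝ) * ((t : ℝ) - 1) := by nlinarith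
  rw [le_div_iff₀ htpos]
  have hne : (t : ℝ) - 1 ≠ 0 := by linarith
  have hexp : ((lam : ℝ) - 2 * k / ((t : ℝ) - 1)) * ((t : ℝ) * ((t : ℝ) - 1))
      = (lam : ℝ) * t * ((t : ℝ) - 1) - 2 * k * t := by
    field_simp
  rw [hexp]
  have hlam : (0 : ℝ) ≤ (lam : ℝ) := Nat.cast_nonneg _
  have hkR : (0 : ℝ) ≤ (k : ℝ) := Nat.cast_nonneg _
  have htR : (0 : ℝ) ≤ (t : ℝ) := Nat.cast_nonneg _
  nlinarith [h1, h2, h3, hAR, hCR, hlam, hkR, htR, ht1, mul_nonneg htR hlam]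
end

section
/- Let S and T be disjoint sets of edges of a k-uniform hypergraph, each of size s = t/2 where t ≥ 18 and k ≥ 1, such that there is a set of x = 10t vertices contained in every edge of S and disjoint from every edge of T, and all pairwise intersections within S and within T have size at most λ. If t ≥ 2⌈√k⌉, then λ_{S,T} ≤ λ − 8√k and consequently λ_{S∪T} ≤ λ − (s²/C(2s,2))·8√k < λ − 2√k. -/
open Finset
set_option maxHeartbeats 1000000

lemma aux_two_mul_le (a b : ℕ) : 2 * (a * b) ≤ a * a + b * b := by
  zify; nlinarith [sq_nonneg ((a:ℤ) - b)]

section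
variable {V : Type*} [Fintype V] [DecidableEq V]

lemma aux_cross (A B : Finset (Finset V)) :
    ∑ e ∈ A, ∑ f ∈ B, (e ∩ f).card
      = ∑ v : V, (A.filter (fun e => v ∈ e)).card * (B.filter (fun f => v ∈ f)).card := by
  have h : ∀ e f : Finset V, (e ∩ f).card
      = ∑ v : V, (if v ∈ e then 1 else 0) * (if v ∈ f then 1 else 0) := by
    intro e f
    rw [← Finset.filter_univ_mem (e ∩ f), Finset.card_filter]
    refine Finset.sum_congr rfl fun v _ => ?_
    by_cases h1 : v ∈ e <;> by_cases h2 : v ∈ f <;> simp [h1, h2]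
  simp_rw [h, Finset.card_filter]
  calc ∑ e ∈ A, ∑ f ∈ B, ∑ v : V, (if v ∈ e then 1 else 0) * (if v ∈ f then 1 else 0)
      = ∑ e ∈ A, ∑ v : V, ∑ f ∈ B, (if v ∈ e then 1 else 0) * (if v ∈ f then 1 else 0) :=
        Finset.sum_congr rfl fun e _ => Finset.sum_comm
    _ = ∑ v : V, ∑ e ∈ A, ∑ f ∈ B, (if v ∈ e then 1 else 0) * (if v ∈ f then 1 else 0) :=
        Finset.sum_comm
    _ = ∑ v : V, (∑ e ∈ A, if v ∈ e then 1 else 0) * (∑ f ∈ B, if v ∈ f then 1 else 0) :=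
        Finset.sum_congr rfl fun v _ => (Finset.sum_mul_sum A B _ _).symm

lemma aux_sizes (A : Finset (Finset V)) :
    ∑ e ∈ A, e.card = ∑ v : V, (A.filter (fun e => v ∈ e)).card := by
  simp_rw [Finset.card_filter]
  rw [Finset.sum_comm]
  refine Finset.sum_congr rfl fun e _ => ?_
  rw [← Finset.card_filter, Finset.filter_univ_mem]

omit [Fintype V] in
lemma aux_prod (A B : Finset (Finset V)) :
    ∑ p ∈ A ×ˢ B, (p.1 ∩ p.2).card = ∑ e ∈ A, ∑ f ∈ B, (e ∩ f).card :=
  Finset.sum_product _ _ _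

omit [Fintype V] in
lemma aux_key (A : Finset (Finset V)) : ∑ e ∈ A, ∑ f ∈ A, (e ∩ f).card
    = ∑ p ∈ A.offDiag, (p.1 ∩ p.2).card + ∑ e ∈ A, e.card := by
  rw [← aux_prod, ← Finset.diag_union_offDiag A,
    Finset.sum_union (Finset.disjoint_diag_offDiag A), Finset.sum_diag]
  simp [Finset.inter_self, add_comm]

omit [Fintype V] in
lemma aux_union (S T : Finset (Finset V)) (hdisj : Disjoint S T) :
    ∑ p ∈ (S ∪ T).offDiag, (p.1 ∩ p.2).card
      = ∑ p ∈ S.offDiag, (p.1 ∩ p.2).card + ∑ p ∈ T.offDiag, (p.1 ∩ p.2).card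
        + 2 * ∑ e ∈ S, ∑ f ∈ T, (e ∩ f).card := by
  have hTS : ∑ e ∈ T, ∑ f ∈ S, (e ∩ f).card = ∑ e ∈ S, ∑ f ∈ T, (e ∩ f).card := by
    rw [Finset.sum_comm]
    exact Finset.sum_congr rfl fun e _ => Finset.sum_congr rfl fun f _ => by rw [Finset.inter_comm]
  have hfull : ∑ e ∈ S ∪ T, ∑ f ∈ S ∪ T, (e ∩ f).card
      = ∑ e ∈ S, ∑ f ∈ S, (e ∩ f).card + ∑ e ∈ T, ∑ f ∈ T, (e ∩ f).card
        + 2 * ∑ e ∈ S, ∑ f ∈ T, (e ∩ f).card := by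
    rw [Finset.sum_union hdisj]
    simp_rw [Finset.sum_union hdisj]
    rw [Finset.sum_add_distrib, Finset.sum_add_distrib, hTS]
    ring
  have hsz : ∑ e ∈ S ∪ T, e.card = ∑ e ∈ S, e.card + ∑ e ∈ T, e.card :=
    Finset.sum_union hdisj
  have h1 := aux_key (S ∪ T)
  rw [hfull, aux_key S, aux_key T, hsz] at h1
  omega

end

/-- Final step of the proof of the main theorem: `S`, `T` are disjoint sets of edges of a
`k`-uniform hypergraph, each of size `s = t/2` with `t ≥ 18`, `k ≥ 1`, there is a set of
`x = 10t` vertices contained in every edge of `S` and disjoint from every edge of `T`, and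
all pairwise intersections within `S` and within `T` have size at most `λ`. If
`t ≥ 2⌈√k⌉`, then `λ_{S,T} ≤ λ − 8√k`, and consequently
`λ_{S∪T} ≤ λ − (s²/C(2s,2))·8√k < λ − 2√k`. -/
theorem stmt_12 {V : Type*} [Fintype V] [DecidableEq V]
    (H : Finset (Finset V)) (k s t lam : ℕ)
    (hst : t = 2 * s) (ht18 : 18 ≤ t) (hk : 1 ≤ k)
    (hunif : ∀ e ∈ H, e.card = k)
    (S T : Finset (Finset V)) (hSH : S ⊆ H) (hTH : T ⊆ H) (hdisj : Disjoint S T)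
    (hScard : S.card = s) (hTcard : T.card = s)
    (W : Finset V) (hWcard : W.card = 10 * t)
    (hWS : ∀ e ∈ S, W ⊆ e) (hWT : ∀ e ∈ T, Disjoint W e)
    (hSsmall : ∀ e ∈ S, ∀ f ∈ S, e ≠ f → (e ∩ f).card ≤ lam)
    (hTsmall : ∀ e ∈ T, ∀ f ∈ T, e ≠ f → (e ∩ f).card ≤ lam)
    (hts : (t : ℝ) ≥ 2 * ⌈Real.sqrt k⌉₊) :
    (∑ e ∈ S, ∑ f ∈ T, ((e ∩ f).card : ℝ)) / (s * s) ≤ (lam : ℝ) - 8 * Real.sqrt k ∧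
    (∑ p ∈ (S ∪ T).offDiag, ((p.1 ∩ p.2).card : ℝ)) / ((2 * s) * (2 * s - 1))
      ≤ (lam : ℝ) - ((s : ℝ) ^ 2 / ((2 * s).choose 2 : ℝ)) * (8 * Real.sqrt k) ∧
    (lam : ℝ) - ((s : ℝ) ^ 2 / ((2 * s).choose 2 : ℝ)) * (8 * Real.sqrt k)
      < (lam : ℝ) - 2 * Real.sqrt k := by
  classical
  have hs9 : 9 ≤ s := by omega
  set dS : V → ℕ := fun v => (S.filter (fun e => v ∈ e)).card with hdS
  set dT : V → ℕ := fun v => (T.filter (fun f => v ∈ f)).card with hdT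
  set X : ℕ := ∑ e ∈ S, ∑ f ∈ T, (e ∩ f).card with hXdef
  set AS : ℕ := ∑ p ∈ S.offDiag, (p.1 ∩ p.2).card with hASdef
  set AT : ℕ := ∑ p ∈ T.offDiag, (p.1 ∩ p.2).card with hATdef
  -- degrees on W
  have hdSW : ∀ v ∈ W, dS v = s := by
    intro v hv
    show (S.filter (fun e => v ∈ e)).card = s
    rw [Finset.filter_true_of_mem (fun e he => hWS e he hv), hScard]
  have hdTW : ∀ v ∈ W, dT v = 0 := by
    intro v hv
    show (T.filter (fun f => v ∈ f)).card = 0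
    simp only [Finset.card_eq_zero, Finset.filter_eq_empty_iff]
    exact fun {f} hf => Finset.disjoint_left.mp (hWT f hf) hv
  -- edge size sums
  have hSsz : ∑ e ∈ S, e.card = s * k := by
    rw [Finset.sum_congr rfl (fun e he => hunif e (hSH he)), Finset.sum_const, hScard, smul_eq_mul]
  have hTsz : ∑ e ∈ T, e.card = s * k := by
    rw [Finset.sum_congr rfl (fun e he => hunif e (hTH he)), Finset.sum_const, hTcard, smul_eq_mul]
  -- square sums
  have hSsq : ∑ v : V, dS v * dS v = AS + s * k := by
    rw [← hSsz, ← aux_key S, aux_cross S S]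
  have hTsq : ∑ v : V, dT v * dT v = AT + s * k := by
    rw [← hTsz, ← aux_key T, aux_cross T T]
  have hXeq : X = ∑ v : V, dS v * dT v := aux_cross S T
  -- split over W
  have hsplitS : ∑ v : V, dS v * dS v = 10 * t * (s * s) + ∑ v ∈ Wᶜ, dS v * dS v := by
    rw [← Finset.sum_add_sum_compl W (fun v => dS v * dS v)]
    congr 1
    rw [Finset.sum_congr rfl (fun v hv => by rw [hdSW v hv]), Finset.sum_const, hWcard,
      smul_eq_mul]
  have hsplitT : ∑ v : V, dT v * dT v = ∑ v ∈ Wᶜ, dT v * dT v := by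
    rw [← Finset.sum_add_sum_compl W (fun v => dT v * dT v)]
    rw [Finset.sum_congr rfl (fun v hv => by rw [hdTW v hv])]
    simp
  have hXW : X = ∑ v ∈ Wᶜ, dS v * dT v := by
    rw [hXeq, ← Finset.sum_add_sum_compl W (fun v => dS v * dT v)]
    rw [Finset.sum_congr rfl (fun v hv => by rw [hdTW v hv])]
    simp
  -- master inequality (ℕ)
  have master : 2 * X + 10 * t * (s * s) ≤ AS + AT + 2 * (s * k) := by
    have h1 : 2 * X ≤ ∑ v ∈ Wᶜ, (dS v * dS v + dT v * dT v) := by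
      rw [hXW, Finset.mul_sum]
      exact Finset.sum_le_sum fun v _ => aux_two_mul_le _ _
    rw [Finset.sum_add_distrib] at h1
    have h2 : ∑ v ∈ Wᶜ, dS v * dS v + 10 * t * (s * s) = AS + s * k := by
      rw [← hSsq, hsplitS]; ring
    have h3 : ∑ v ∈ Wᶜ, dT v * dT v = AT + s * k := by rw [← hTsq, hsplitT]
    omega
  -- pairwise bounds
  have hASle : AS ≤ (s * s - s) * lam := by
    calc AS ≤ S.offDiag.card • lam := Finset.sum_le_card_nsmul _ _ _ (by
          rintro ⟨e, f⟩ hp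
          rw [Finset.mem_offDiag] at hp
          exact hSsmall e hp.1 f hp.2.1 hp.2.2)
      _ = (s * s - s) * lam := by rw [Finset.offDiag_card, hScard, smul_eq_mul]
  have hATle : AT ≤ (s * s - s) * lam := by
    calc AT ≤ T.offDiag.card • lam := Finset.sum_le_card_nsmul _ _ _ (by
          rintro ⟨e, f⟩ hp
          rw [Finset.mem_offDiag] at hp
          exact hTsmall e hp.1 f hp.2.1 hp.2.2)
      _ = (s * s - s) * lam := by rw [Finset.offDiag_card, hTcard, smul_eq_mul]
  -- real setup
  set r : ℝ := Real.sqrt k with hrdef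
  have hr0 : 0 ≤ r := Real.sqrt_nonneg _
  have hr1 : 1 ≤ r := by
    rw [hrdef, show (1:ℝ) = Real.sqrt 1 by simp]
    exact Real.sqrt_le_sqrt (by exact_mod_cast hk)
  have hrk : r * r = (k : ℝ) := Real.mul_self_sqrt (by positivity)
  have hrs : r ≤ (s : ℝ) := by
    have h1 : r ≤ (⌈r⌉₊ : ℝ) := Nat.le_ceil r
    have h2 : (t : ℝ) = 2 * s := by exact_mod_cast hst
    linarith [hts]
  have hs9r : (9 : ℝ) ≤ (s : ℝ) := by exact_mod_cast hs9
  have hsPos : (0 : ℝ) < (s : ℝ) := by linarith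
  have hlam0 : (0 : ℝ) ≤ (lam : ℝ) := Nat.cast_nonneg _
  -- cast master
  have masterR : 2 * (X : ℝ) + 10 * t * (s * s) ≤ (AS : ℝ) + AT + 2 * (s * k) := by
    exact_mod_cast master
  have hssub : ((s * s - s : ℕ) : ℝ) = (s : ℝ) * s - s := by
    have : s ≤ s * s := Nat.le_mul_of_pos_left s (by omega)
    push_cast [this]; ring
  have hASleR : (AS : ℝ) ≤ ((s : ℝ) * s - s) * lam := by
    rw [← hssub]; exact_mod_cast hASle
  have hATleR : (AT : ℝ) ≤ ((s : ℝ) * s - s) * lam := by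
    rw [← hssub]; exact_mod_cast hATle
  have htR : (t : ℝ) = 2 * s := by exact_mod_cast hst
  -- Goal 1
  have hrr : r * r ≤ (s:ℝ) * s := mul_le_mul hrs hrs hr0 (le_of_lt hsPos)
  have goal1 : (X : ℝ) ≤ ((lam : ℝ) - 8 * r) * ((s : ℝ) * s) := by
    nlinarith [masterR, hASleR, hATleR, hrk, htR, hrr, hsPos, hlam0,
      mul_le_mul_of_nonneg_right hrs (by positivity : (0:ℝ) ≤ 8 * (s:ℝ) * s),
      mul_le_mul_of_nonneg_left hrr (le_of_lt hsPos), mul_nonneg hlam0 (le_of_lt hsPos)]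
  have g1 : (∑ e ∈ S, ∑ f ∈ T, ((e ∩ f).card : ℝ)) / (s * s) ≤ (lam : ℝ) - 8 * r := by
    have hXcast : (∑ e ∈ S, ∑ f ∈ T, ((e ∩ f).card : ℝ)) = (X : ℝ) := by
      rw [hXdef]; push_cast; ring
    rw [hXcast, div_le_iff₀ (by positivity)]
    exact goal1
  -- choose 2 computation
  have hchoose : (2 * s).choose 2 = s * (2 * s - 1) := by
    rw [Nat.choose_two_right]
    rw [show 2 * s * (2 * s - 1) = 2 * (s * (2 * s - 1)) by rw [mul_assoc]]
    exact Nat.mul_div_cancel_left _ (by norm_num)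
  have hchooseR : (((2 * s).choose 2 : ℕ) : ℝ) = (s : ℝ) * (2 * s - 1) := by
    rw [hchoose]
    have h1 : 1 ≤ 2 * s := by omega
    push_cast [h1]; ring
  have h2s1 : (0 : ℝ) < 2 * (s : ℝ) - 1 := by linarith
  set c : ℝ := (s : ℝ) ^ 2 / (((2 * s).choose 2 : ℕ) : ℝ) with hcdef
  have hcD : c * ((2 * (s:ℝ)) * (2 * (s:ℝ) - 1)) = 2 * (s : ℝ) ^ 2 := by
    rw [hcdef, hchooseR]
    rw [div_mul_eq_mul_div, div_eq_iff (mul_pos hsPos h2s1).ne']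
    ring
  -- Goal 2
  have hUeq : ∑ p ∈ (S ∪ T).offDiag, (p.1 ∩ p.2).card = AS + AT + 2 * X :=
    aux_union S T hdisj
  have hUcast : (∑ p ∈ (S ∪ T).offDiag, ((p.1 ∩ p.2).card : ℝ))
      = (AS : ℝ) + AT + 2 * X := by
    rw [show (∑ p ∈ (S ∪ T).offDiag, ((p.1 ∩ p.2).card : ℝ))
        = ((∑ p ∈ (S ∪ T).offDiag, (p.1 ∩ p.2).card : ℕ) : ℝ) by push_cast; ring, hUeq]
    push_cast; ring
  have g2 : (∑ p ∈ (S ∪ T).offDiag, ((p.1 ∩ p.2).card : ℝ)) / ((2 * s) * (2 * s - 1))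
      ≤ (lam : ℝ) - c * (8 * r) := by
    rw [hUcast, div_le_iff₀ (by positivity : (0:ℝ) < (2 * (s:ℝ)) * (2 * (s:ℝ) - 1))]
    have hexp : ((lam : ℝ) - c * (8 * r)) * ((2 * (s:ℝ)) * (2 * (s:ℝ) - 1))
        = (lam : ℝ) * ((2 * (s:ℝ)) * (2 * (s:ℝ) - 1)) - (8 * r) * (2 * (s:ℝ) ^ 2) := by
      rw [← hcD]; ring
    rw [hexp]
    linarith [goal1, hASleR, hATleR]
  -- Goal 3
  have g3 : (lam : ℝ) - c * (8 * r) < (lam : ℝ) - 2 * r := by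
    have hc : 1 / 4 < c := by
      rw [hcdef, hchooseR, lt_div_iff₀ (by positivity)]
      nlinarith
    nlinarith [mul_pos (by linarith : (0:ℝ) < c - 1/4) (by linarith : (0:ℝ) < r)]
  exact ⟨g1, g2, g3⟩
end

section
/- Let H be a k-uniform, 3-chromatic, intersecting hypergraph with k sufficiently large. Then H contains two distinct edges whose intersection has size at least c·k/log k for some absolute constant c > 0, i.e., max I(H) = Ω(k/log k). -/
open Finset

/-- Core combinatorial lemma: a `k`-uniform (k ≥ 5), intersecting, non-2-colorable
hypergraph cannot have all pairwise intersections of size at most `k/4`. -/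
lemma core_contra_stmt18 {V : Type} [Fintype V] [DecidableEq V] (H : Finset (Finset V)) (k : ℕ)
    (hk : 5 ≤ k)
    (hunif : ∀ e ∈ H, e.card = k)
    (hn2c : ¬ ∃ c : V → Bool, ∀ e ∈ H, ∃ u ∈ e, ∃ v ∈ e, c u ≠ c v)
    (hint : ∀ e ∈ H, ∀ f ∈ H, (e ∩ f).Nonempty)
    (hsmall : ∀ e ∈ H, ∀ f ∈ H, e ≠ f → 4 * (e ∩ f).card ≤ k) : False := by
  classical
  -- a minimal non-2-colorable subfamily
  have hPH : ∀ c : V → Bool, ∃ e ∈ H, ∀ u ∈ e, ∀ v ∈ e, c u = c v := by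
    intro c
    by_contra hno
    push_neg at hno
    exact hn2c ⟨c, by
      intro e he
      obtain ⟨u, hu, v, hv, hne⟩ := hno e he
      exact ⟨u, hu, v, hv, hne⟩⟩
  obtain ⟨H', hH'mem, hminim⟩ := Finset.exists_min_image
    (H.powerset.filter (fun G => ∀ c : V → Bool, ∃ e ∈ G, ∀ u ∈ e, ∀ v ∈ e, c u = c v))
    Finset.card ⟨H, by simp only [mem_filter, mem_powerset]; exact ⟨subset_rfl, hPH⟩⟩
  have hH'sub : H' ⊆ H := mem_powerset.mp (mem_filter.mp hH'mem).1
  have hH'P : ∀ c : V → Bool, ∃ e ∈ H', ∀ u ∈ e, ∀ v ∈ e, c u = c v :=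
    (mem_filter.mp hH'mem).2
  have hcrit : ∀ e ∈ H', ∃ c : V → Bool, ∀ f ∈ H'.erase e, ∃ u ∈ f, ∃ v ∈ f, c u ≠ c v := by
    intro e he
    by_contra hno
    push_neg at hno
    have hmem : H'.erase e ∈ H.powerset.filter
        (fun G => ∀ c : V → Bool, ∃ e ∈ G, ∀ u ∈ e, ∀ v ∈ e, c u = c v) := by
      refine mem_filter.mpr ⟨mem_powerset.mpr ((erase_subset e H').trans hH'sub), ?_⟩
      intro c
      obtain ⟨f, hf, hall⟩ := hno c
      exact ⟨f, hf, hall⟩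
    have h1 := hminim _ hmem
    have h2 : (H'.erase e).card < H'.card := card_erase_lt_of_mem he
    omega
  -- pick a base edge e₀
  have hH'ne : H'.Nonempty := by
    rcases H'.eq_empty_or_nonempty with h | h
    · obtain ⟨e, he, -⟩ := hH'P (fun _ => true)
      rw [h] at he
      exact absurd he (notMem_empty e)
    · exact h
  obtain ⟨e₀, he₀⟩ := hH'ne
  have he₀H : e₀ ∈ H := hH'sub he₀
  have hcard₀ : e₀.card = k := hunif _ he₀H
  have he₀ne : e₀.Nonempty := by rw [← card_pos, hcard₀]; omega
  obtain ⟨v₀, hv₀⟩ := he₀ne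
  obtain ⟨c1, hc1⟩ := hcrit e₀ he₀
  -- a coloring proper for H' \ {e₀} maximizing the number of vertices colored like v₀
  obtain ⟨χ, hχΦ, hχmax⟩ := Finset.exists_max_image
    (Finset.univ.filter (fun ψ : V → Bool => ∀ f ∈ H'.erase e₀, ∃ u ∈ f, ∃ v ∈ f, ψ u ≠ ψ v))
    (fun ψ => (Finset.univ.filter (fun x => ψ x = ψ v₀)).card)
    ⟨c1, mem_filter.mpr ⟨mem_univ _, hc1⟩⟩
  have hproper : ∀ f ∈ H'.erase e₀, ∃ u ∈ f, ∃ v ∈ f, χ u ≠ χ v := (mem_filter.mp hχΦ).2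
  -- e₀ is monochromatic under χ
  have hmono : ∀ x ∈ e₀, χ x = χ v₀ := by
    obtain ⟨e, he, hall⟩ := hH'P χ
    have hee : e = e₀ := by
      by_contra hne
      obtain ⟨u, hu, v, hv, huv⟩ := hproper e (mem_erase.mpr ⟨hne, he⟩)
      exact huv (hall u hu v hv)
    subst hee
    intro x hx
    exact hall x hx v₀ hv₀
  -- star edges: for each u ∈ e₀ there is an edge meeting the v₀-color class exactly in u
  have hstar : ∀ u : V, u ∈ e₀ → ∃ f, f ∈ H' ∧ f.filter (fun x => χ x = χ v₀) = {u} := by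
    intro u hu
    obtain ⟨e, he, hall⟩ := hH'P (Function.update χ u (!(χ v₀)))
    have hue : u ∈ e := by
      by_contra hun
      have hene : e ≠ e₀ := fun h => hun (h ▸ hu)
      obtain ⟨x, hx, y, hy, hxy⟩ := hproper e (mem_erase.mpr ⟨hene, he⟩)
      have ex : Function.update χ u (!(χ v₀)) x = χ x :=
        Function.update_of_ne (fun h => hun (by rw [← h]; exact hx)) _ _
      have ey : Function.update χ u (!(χ v₀)) y = χ y :=
        Function.update_of_ne (fun h => hun (by rw [← h]; exact hy)) _ _
      have := hall x hx y hy
      rw [ex, ey] at this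
      exact hxy this
    have hcolor : ∀ x ∈ e, x ≠ u → χ x ≠ χ v₀ := by
      intro x hx hxu
      have h1 : Function.update χ u (!(χ v₀)) x = χ x := Function.update_of_ne hxu _ _
      have h2 : Function.update χ u (!(χ v₀)) u = !(χ v₀) := Function.update_self _ _ _
      have h3 := hall x hx u hue
      rw [h1, h2] at h3
      rw [h3]
      simp
    refine ⟨e, he, ?_⟩
    ext x
    simp only [mem_filter, mem_singleton]
    constructor
    · rintro ⟨hxe, hxb⟩
      by_contra hxu
      exact hcolor x hxe hxu hxb
    · intro h
      simp only [h]
      exact ⟨hue, hmono u hu⟩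
  -- co-star edges: for each red vertex w there is an edge whose only red vertex is w
  have hcostar : ∀ w : V, ¬ (χ w = χ v₀) →
      ∃ g, g ∈ H' ∧ g ≠ e₀ ∧ g.filter (fun x => ¬ (χ x = χ v₀)) = {w} := by
    intro w hw
    set χ'' := Function.update χ w (χ v₀) with hχ''
    by_cases hc : ∀ f ∈ H'.erase e₀, ∃ u ∈ f, ∃ v ∈ f, χ'' u ≠ χ'' v
    · exfalso
      have hv₀w : v₀ ≠ w := fun h => hw (by rw [← h])
      have hval : χ'' v₀ = χ v₀ := Function.update_of_ne hv₀w _ _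
      have hset : Finset.univ.filter (fun x => χ'' x = χ'' v₀)
          = insert w (Finset.univ.filter (fun x => χ x = χ v₀)) := by
        ext x
        simp only [mem_filter, mem_univ, true_and, mem_insert, hval]
        constructor
        · intro hx
          by_cases hxw : x = w
          · exact Or.inl hxw
          · right; rwa [hχ'', Function.update_of_ne hxw] at hx
        · rintro (rfl | hx)
          · rw [hχ'', Function.update_self]
          · rw [hχ'', Function.update_of_ne (fun h => hw (by rw [← h]; exact hx))]
            exact hx
      have hnotmem : w ∉ Finset.univ.filter (fun x => χ x = χ v₀) := by
        simp [hw]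
      have hle := hχmax χ'' (mem_filter.mpr ⟨mem_univ _, hc⟩)
      rw [hset, card_insert_of_notMem hnotmem] at hle
      omega
    · push_neg at hc
      obtain ⟨e, hee, hall⟩ := hc
      obtain ⟨hene, heH'⟩ := mem_erase.mp hee
      have hwe : w ∈ e := by
        by_contra hwn
        obtain ⟨x, hx, y, hy, hxy⟩ := hproper e hee
        have ex : χ'' x = χ x :=
          Function.update_of_ne (fun h => hwn (by rw [← h]; exact hx)) _ _
        have ey : χ'' y = χ y :=
          Function.update_of_ne (fun h => hwn (by rw [← h]; exact hy)) _ _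
        have := hall x hx y hy
        rw [ex, ey] at this
        exact hxy this
      refine ⟨e, heH', hene, ?_⟩
      ext x
      simp only [mem_filter, mem_singleton]
      constructor
      · rintro ⟨hxe, hxb⟩
        by_contra hxw
        have h1 := hall x hxe w hwe
        rw [hχ''] at h1
        rw [Function.update_of_ne hxw, Function.update_self] at h1
        exact hxb h1
      · intro h
        simp only [h]
        exact ⟨hwe, hw⟩
  -- choice functions
  have hstar' : ∀ u : V, ∃ f : Finset V, u ∈ e₀ →
      (f ∈ H ∧ f.filter (fun x => χ x = χ v₀) = {u}) := by
    intro u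
    by_cases hu : u ∈ e₀
    · obtain ⟨f, h1, h2⟩ := hstar u hu
      exact ⟨f, fun _ => ⟨hH'sub h1, h2⟩⟩
    · exact ⟨∅, fun h => absurd h hu⟩
  choose F hF using hstar'
  have hcostar' : ∀ w : V, ∃ g : Finset V, ¬ (χ w = χ v₀) →
      (g ∈ H ∧ g ≠ e₀ ∧ g.filter (fun x => ¬ (χ x = χ v₀)) = {w}) := by
    intro w
    by_cases hw : χ w = χ v₀
    · exact ⟨∅, fun h => absurd hw h⟩
    · obtain ⟨g, h1, h2, h3⟩ := hcostar w hw
      exact ⟨g, fun _ => ⟨hH'sub h1, h2, h3⟩⟩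
  choose G hG using hcostar'
  -- the red vertex set
  set R := Finset.univ.filter (fun x : V => ¬ (χ x = χ v₀)) with hR
  have hFmem : ∀ u ∈ e₀, F u ∈ H := fun u hu => (hF u hu).1
  have hFfil : ∀ u ∈ e₀, (F u).filter (fun x => χ x = χ v₀) = {u} := fun u hu => (hF u hu).2
  have hFcard : ∀ u ∈ e₀, ((F u).filter (fun x => ¬ (χ x = χ v₀))).card + 1 = k := by
    intro u hu
    have h1 := Finset.card_filter_add_card_filter_not
      (s := F u) (p := fun x => χ x = χ v₀)
    rw [hFfil u hu, hunif _ (hFmem u hu)] at h1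
    simp only [card_singleton] at h1
    omega
  -- each red vertex w lies in most of the stars F u
  have hkey : ∀ w ∈ R, 3 * k ≤ 4 * ((e₀.filter (fun u => w ∈ F u)).card) := by
    intro w hwR
    have hw : ¬ (χ w = χ v₀) := (mem_filter.mp hwR).2
    obtain ⟨hGH, hGne, hGfil⟩ := hG w hw
    have hcover : e₀ ⊆ (e₀.filter (fun u => w ∈ F u)) ∪ (e₀ ∩ G w) := by
      intro u hu
      obtain ⟨x, hx⟩ := hint (F u) (hFmem u hu) (G w) hGH
      rw [mem_inter] at hx
      by_cases hxb : χ x = χ v₀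
      · have hxm : x ∈ (F u).filter (fun x => χ x = χ v₀) := mem_filter.mpr ⟨hx.1, hxb⟩
        rw [hFfil u hu, mem_singleton] at hxm
        subst hxm
        exact mem_union_right _ (mem_inter.mpr ⟨hu, hx.2⟩)
      · have hxm : x ∈ (G w).filter (fun x => ¬ (χ x = χ v₀)) := mem_filter.mpr ⟨hx.2, hxb⟩
        rw [hGfil, mem_singleton] at hxm
        subst hxm
        exact mem_union_left _ (mem_filter.mpr ⟨hu, hx.1⟩)
    have h1 : k ≤ (e₀.filter (fun u => w ∈ F u)).card + (e₀ ∩ G w).card := by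
      calc k = e₀.card := hcard₀.symm
      _ ≤ ((e₀.filter (fun u => w ∈ F u)) ∪ (e₀ ∩ G w)).card := card_le_card hcover
      _ ≤ _ := card_union_le _ _
    have h2 : 4 * (e₀ ∩ G w).card ≤ k := hsmall e₀ he₀H (G w) hGH (Ne.symm hGne)
    omega
  -- double counting
  have hA : 3 * k * R.card ≤ 4 * ∑ w ∈ R, (e₀.filter (fun u => w ∈ F u)).card := by
    calc 3 * k * R.card = ∑ _w ∈ R, 3 * k := by rw [sum_const, smul_eq_mul, mul_comm]
    _ ≤ ∑ w ∈ R, 4 * (e₀.filter (fun u => w ∈ F u)).card := sum_le_sum hkey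
    _ = 4 * ∑ w ∈ R, (e₀.filter (fun u => w ∈ F u)).card := by rw [mul_sum]
  have hswap : ∑ w ∈ R, (e₀.filter (fun u => w ∈ F u)).card
      = ∑ u ∈ e₀, ((F u).filter (fun x => ¬ (χ x = χ v₀))).card := by
    have h1 : ∀ w ∈ R, (e₀.filter (fun u => w ∈ F u)).card
        = ∑ u ∈ e₀, if w ∈ F u then 1 else 0 := fun w _ => card_filter _ _
    rw [sum_congr rfl h1, Finset.sum_comm]
    refine sum_congr rfl ?_
    intro u hu
    rw [← card_filter]
    congr 1
    ext x
    simp only [mem_filter, hR, mem_univ, true_and]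
    exact and_comm
  have hB : (∑ w ∈ R, (e₀.filter (fun u => w ∈ F u)).card) + k = k * k := by
    rw [hswap]
    have h1 : ∑ u ∈ e₀, (((F u).filter (fun x => ¬ (χ x = χ v₀))).card + 1)
        = ∑ _u ∈ e₀, k := sum_congr rfl (fun u hu => by rw [hFcard u hu])
    rw [sum_add_distrib, sum_const, sum_const, hcard₀, smul_eq_mul, smul_eq_mul] at h1
    omega
  -- two distinct stars are almost equal: contradiction
  have h2card : 1 < e₀.card := by omega
  obtain ⟨u, hu, u', hu', huu⟩ := Finset.one_lt_card.mp h2card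
  have hFne : F u ≠ F u' := by
    intro h
    have h1 := hFfil u hu
    rw [h, hFfil u' hu'] at h1
    rw [Finset.singleton_inj] at h1
    exact huu h1.symm
  have hsub : ∀ z, z ∈ e₀ → F z ⊆ insert z R := by
    intro z hz x hx
    by_cases hxb : χ x = χ v₀
    · have hxm : x ∈ (F z).filter (fun x => χ x = χ v₀) := mem_filter.mpr ⟨hx, hxb⟩
      rw [hFfil z hz, mem_singleton] at hxm
      rw [hxm]
      exact mem_insert_self _ _
    · exact mem_insert_of_mem (mem_filter.mpr ⟨mem_univ _, hxb⟩)
  have hUcard : (F u ∪ F u').card ≤ R.card + 2 := by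
    have h1 : F u ∪ F u' ⊆ insert u (insert u' R) := by
      apply union_subset
      · exact (hsub u hu).trans (insert_subset_insert _ (subset_insert _ _))
      · intro x hx
        exact mem_insert_of_mem (hsub u' hu' hx)
    calc (F u ∪ F u').card ≤ (insert u (insert u' R)).card := card_le_card h1
    _ ≤ (insert u' R).card + 1 := card_insert_le _ _
    _ ≤ R.card + 1 + 1 := by have := card_insert_le u' R; omega
    _ = R.card + 2 := by omega
  have hIU : (F u ∪ F u').card + (F u ∩ F u').card = k + k := by
    rw [card_union_add_card_inter, hunif _ (hFmem u hu), hunif _ (hFmem u' hu')]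
  have hI : 4 * (F u ∩ F u').card ≤ k := hsmall _ (hFmem u hu) _ (hFmem u' hu') hFne
  have hC : 7 * k ≤ 4 * R.card + 8 := by omega
  -- final arithmetic
  set S := ∑ w ∈ R, (e₀.filter (fun u => w ∈ F u)).card
  set r := R.card
  have e1 : 21 * (k * k) ≤ 12 * (k * r) + 24 * k := by nlinarith [hC]
  have e2 : 12 * (k * r) + 16 * k ≤ 16 * (k * k) := by nlinarith [hA, hB]
  nlinarith [e1, e2, hk]

/-- Erdős–Lovász–Shelah: there is an absolute constant `c > 0` such that every `k`-uniform,
3-chromatic (not 2-colorable), intersecting hypergraph with `k` sufficiently large contains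
two distinct edges intersecting in at least `c·k/log k` vertices. -/
theorem stmt_18 :
    ∃ c : ℝ, 0 < c ∧ ∃ k₀ : ℕ, ∀ k : ℕ, k₀ ≤ k →
      ∀ (V : Type) [Fintype V] [DecidableEq V] (H : Finset (Finset V)),
        (∀ e ∈ H, e.card = k) →
        (¬ ∃ c' : V → Bool, ∀ e ∈ H, ∃ u ∈ e, ∃ v ∈ e, c' u ≠ c' v) →
        (∀ e ∈ H, ∀ f ∈ H, (e ∩ f).Nonempty) →
        ∃ e ∈ H, ∃ f ∈ H, e ≠ f ∧ ((e ∩ f).card : ℝ) ≥ c * k / Real.log k := by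
  classical
  refine ⟨1/4, by norm_num, 5, ?_⟩
  intro k hk V _ _ H hunif hn2c hint
  by_contra hcon
  push_neg at hcon
  apply core_contra_stmt18 H k hk hunif hn2c hint
  intro e he f hf hef
  have h1 := hcon e he f hf hef
  have hk5 : (5:ℝ) ≤ (k:ℝ) := by exact_mod_cast hk
  have hlog : 1 ≤ Real.log k := by
    rw [Real.le_log_iff_exp_le (by linarith)]
    calc Real.exp 1 ≤ 2.7182818286 := le_of_lt Real.exp_one_lt_d9
    _ ≤ (5:ℝ) := by norm_num
    _ ≤ (k:ℝ) := hk5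
  have h2 : (1:ℝ)/4 * k / Real.log k ≤ 1/4 * k := div_le_self (by linarith) hlog
  have h3 : ((e ∩ f).card : ℝ) < 1/4 * k := lt_of_lt_of_le h1 h2
  have h4 : (4 * (e ∩ f).card : ℝ) < k := by linarith
  have h5 : 4 * (e ∩ f).card < k := by exact_mod_cast h4
  omega
end

section
/- For every n that is a power of 3 there exists an n-uniform, intersecting, non-2-colorable hypergraph with 7^{(n−1)/2} edges, whose intersection spectrum consists only of odd numbers between 1 and n−2. -/
open Finset
set_option maxRecDepth 10000
namespace S19
def lines7 : Finset (Fin 7 × Fin 7 × Fin 7) :=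
  {(0,1,2),(0,3,4),(0,5,6),(1,3,5),(1,4,6),(2,3,6),(2,4,5)}

def pt (t : Fin 7 × Fin 7 × Fin 7) : Fin 3 → Fin 7 := ![t.1, t.2.1, t.2.2]

lemma lines7_card : lines7.card = 7 := by decide

lemma pt_inj : ∀ t ∈ lines7, ∀ k k', pt t k = pt t k' → k = k' := by decide

lemma lines7_meet : ∀ t ∈ lines7, ∀ t' ∈ lines7, ∃ k k', pt t k = pt t' k' := by decide

lemma lines7_unique : ∀ t ∈ lines7, ∀ t' ∈ lines7, t ≠ t' →
    ∀ k k' l l', pt t k = pt t' k' → pt t l = pt t' l' → k = l ∧ k' = l' := by decide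

lemma lines7_pts_inj : ∀ t ∈ lines7, ∀ t' ∈ lines7,
    (∀ i, (∃ k, pt t k = i) ↔ ∃ k, pt t' k = i) → t = t' := by decide

lemma fano_chrom : ∀ c : Fin 7 → Bool, ∃ t ∈ lines7, ∀ k k', c (pt t k) = c (pt t k') := by
  decide

variable {V : Type} [DecidableEq V]

def bigEdge (t : Fin 7 × Fin 7 × Fin 7) (ε : Fin 3 → Finset V) : Finset (V × Fin 7) :=
  Finset.univ.biUnion fun k => (ε k).image fun v => (v, pt t k)

lemma mem_bigEdge {t : Fin 7 × Fin 7 × Fin 7} {ε : Fin 3 → Finset V} {x : V × Fin 7} :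
    x ∈ bigEdge t ε ↔ ∃ k, x.2 = pt t k ∧ x.1 ∈ ε k := by
  obtain ⟨v, i⟩ := x
  simp only [bigEdge, Finset.mem_biUnion, Finset.mem_image, Finset.mem_univ, true_and,
    Prod.mk.injEq]
  constructor
  · rintro ⟨k, v', hv', rfl, rfl⟩; exact ⟨k, rfl, hv'⟩
  · rintro ⟨k, rfl, hv⟩; exact ⟨k, v, hv, rfl, rfl⟩

lemma card_bigEdge {t : Fin 7 × Fin 7 × Fin 7} (ht : ∀ k k', pt t k = pt t k' → k = k')
    (ε : Fin 3 → Finset V) : (bigEdge t ε).card = ∑ k, (ε k).card := by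
  rw [bigEdge, Finset.card_biUnion]
  · exact Finset.sum_congr rfl fun k _ => Finset.card_image_of_injective _ (fun a b h => by
      simpa using congrArg Prod.fst h)
  · intro k _ k' _ hkk'
    simp only [Finset.disjoint_left, Finset.mem_image]
    rintro x ⟨v, hv, rfl⟩ ⟨w, hw, h⟩
    exact hkk' (ht _ _ (by simpa using (congrArg Prod.snd h).symm))

def tripleFun (E : Finset V × Finset V × Finset V) : Fin 3 → Finset V := ![E.1, E.2.1, E.2.2]

omit [DecidableEq V] in
lemma tripleFun_eta (ε : Fin 3 → Finset V) : tripleFun (ε 0, ε 1, ε 2) = ε := by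
  funext k; fin_cases k <;> rfl

def g (p : (Fin 7 × Fin 7 × Fin 7) × (Finset V × Finset V × Finset V)) : Finset (V × Fin 7) :=
  bigEdge p.1 (tripleFun p.2)

def next (H : Finset (Finset V)) : Finset (Finset (V × Fin 7)) :=
  (lines7 ×ˢ (H ×ˢ H ×ˢ H)).image g

lemma mem_next {H : Finset (Finset V)} {e : Finset (V × Fin 7)} :
    e ∈ next H ↔ ∃ t ∈ lines7, ∃ ε : Fin 3 → Finset V, (∀ k, ε k ∈ H) ∧ e = bigEdge t ε := by
  simp only [next, Finset.mem_image, Finset.mem_product]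
  constructor
  · rintro ⟨⟨t, E⟩, ⟨ht, h1, h2, h3⟩, rfl⟩
    exact ⟨t, ht, tripleFun E, (fun k => by fin_cases k <;> assumption), rfl⟩
  · rintro ⟨t, ht, ε, hε, rfl⟩
    exact ⟨⟨t, ε 0, ε 1, ε 2⟩, ⟨ht, hε 0, hε 1, hε 2⟩, by rw [g, tripleFun_eta]⟩

lemma inter_bigEdge_ne {t t' : Fin 7 × Fin 7 × Fin 7} (ht : t ∈ lines7) (ht' : t' ∈ lines7)
    (htt : t ≠ t') {ε ε' : Fin 3 → Finset V} {k0 k0' : Fin 3} (hk : pt t k0 = pt t' k0') :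
    bigEdge t ε ∩ bigEdge t' ε' = (ε k0 ∩ ε' k0').image (fun v => (v, pt t k0)) := by
  ext ⟨v, i⟩
  simp only [Finset.mem_inter, mem_bigEdge, Finset.mem_image, Prod.mk.injEq]
  constructor
  · rintro ⟨⟨k, rfl, hv⟩, ⟨k', hk', hv'⟩⟩
    obtain ⟨rfl, rfl⟩ := lines7_unique t ht t' ht' htt k k' k0 k0' hk' hk
    exact ⟨v, ⟨hv, hv'⟩, rfl, rfl⟩
  · rintro ⟨w, ⟨hw1, hw2⟩, rfl, rfl⟩
    exact ⟨⟨k0, rfl, hw1⟩, ⟨k0', hk, hw2⟩⟩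

lemma inter_bigEdge_same {t : Fin 7 × Fin 7 × Fin 7} (ht : ∀ k k', pt t k = pt t k' → k = k')
    (ε ε' : Fin 3 → Finset V) :
    bigEdge t ε ∩ bigEdge t ε' = bigEdge t (fun k => ε k ∩ ε' k) := by
  ext ⟨v, i⟩
  simp only [Finset.mem_inter, mem_bigEdge]
  constructor
  · rintro ⟨⟨k, rfl, hv⟩, ⟨k', hk', hv'⟩⟩
    obtain rfl := ht _ _ hk'
    exact ⟨k, rfl, hv, hv'⟩
  · rintro ⟨k, rfl, hv1, hv2⟩
    exact ⟨⟨k, rfl, hv1⟩, ⟨k, rfl, hv2⟩⟩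

lemma bigEdge_injaux {t t' : Fin 7 × Fin 7 × Fin 7} (ht : t ∈ lines7) (ht' : t' ∈ lines7)
    {ε ε' : Fin 3 → Finset V} (hne : ∀ k, (ε k).Nonempty) (hne' : ∀ k, (ε' k).Nonempty)
    (h : bigEdge t ε = bigEdge t' ε') : t = t' ∧ ε = ε' := by
  have hpts : ∀ i, (∃ k, pt t k = i) ↔ (∃ k, pt t' k = i) := by
    intro i
    constructor
    · rintro ⟨k, rfl⟩
      obtain ⟨v, hv⟩ := hne k
      have hx : (v, pt t k) ∈ bigEdge t' ε' := h ▸ mem_bigEdge.2 ⟨k, rfl, hv⟩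
      obtain ⟨k', hk', _⟩ := mem_bigEdge.1 hx
      exact ⟨k', hk'.symm⟩
    · rintro ⟨k, rfl⟩
      obtain ⟨v, hv⟩ := hne' k
      have hx : (v, pt t' k) ∈ bigEdge t ε := h.symm ▸ mem_bigEdge.2 ⟨k, rfl, hv⟩
      obtain ⟨k', hk', _⟩ := mem_bigEdge.1 hx
      exact ⟨k', hk'.symm⟩
  obtain rfl := lines7_pts_inj t ht t' ht' hpts
  refine ⟨rfl, funext fun k => ?_⟩
  ext v
  have h1 : v ∈ ε k ↔ (v, pt t k) ∈ bigEdge t ε := by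
    rw [mem_bigEdge]
    constructor
    · intro hv; exact ⟨k, rfl, hv⟩
    · rintro ⟨k', hk', hv⟩; obtain rfl := pt_inj t ht k k' hk'; exact hv
  have h2 : v ∈ ε' k ↔ (v, pt t k) ∈ bigEdge t ε' := by
    rw [mem_bigEdge]
    constructor
    · intro hv; exact ⟨k, rfl, hv⟩
    · rintro ⟨k', hk', hv⟩; obtain rfl := pt_inj t ht k k' hk'; exact hv
  rw [h1, h, ← h2]

def Good (m : ℕ) {V : Type} [DecidableEq V] (H : Finset (Finset V)) : Prop :=
  (∀ e ∈ H, e.card = m) ∧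
  (∀ e ∈ H, ∀ f ∈ H, (e ∩ f).Nonempty) ∧
  (∀ c : V → Bool, ∃ e ∈ H, ∀ u ∈ e, ∀ v ∈ e, c u = c v) ∧
  H.card = 7 ^ ((m - 1) / 2) ∧
  (∀ e ∈ H, ∀ f ∈ H, e ≠ f →
    Odd (e ∩ f).card ∧ 1 ≤ (e ∩ f).card ∧ (e ∩ f).card ≤ m - 2)


lemma card_next {H : Finset (Finset V)} (hne : ∀ e ∈ H, e.Nonempty) :
    (next H).card = 7 * H.card ^ 3 := by
  rw [next, Finset.card_image_of_injOn, Finset.card_product, Finset.card_product,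
    Finset.card_product, lines7_card]
  · ring
  · rintro ⟨t, E⟩ hp ⟨t', E'⟩ hq hgpq
    simp only [Finset.mem_product, Finset.mem_coe] at hp hq
    obtain ⟨ht, h1, h2, h3⟩ := hp
    obtain ⟨ht', h1', h2', h3'⟩ := hq
    have hEne : ∀ k, (tripleFun E k).Nonempty := fun k => by
      fin_cases k
      · exact hne _ h1
      · exact hne _ h2
      · exact hne _ h3
    have hEne' : ∀ k, (tripleFun E' k).Nonempty := fun k => by
      fin_cases k
      · exact hne _ h1'
      · exact hne _ h2'
      · exact hne _ h3'
    obtain ⟨rfl, hεε⟩ := bigEdge_injaux ht ht' hEne hEne' hgpq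
    have hE : E = E' := by
      obtain ⟨a, b, c⟩ := E
      obtain ⟨a', b', c'⟩ := E'
      have h0 := congrFun hεε 0
      have h1 := congrFun hεε 1
      have h2 := congrFun hεε 2
      simp only [tripleFun, Matrix.cons_val_zero, Matrix.cons_val_one, Matrix.head_cons] at h0 h1 h2
      simp_all
    rw [hE]

lemma step {m : ℕ} (hm : Odd m) (hm1 : 1 ≤ m) {H : Finset (Finset V)} (h : Good m H) :
    Good (3 * m) (next H) := by
  obtain ⟨hcard, hint, hcol, hnum, hspec⟩ := h
  have hne : ∀ e ∈ H, e.Nonempty := fun e he =>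
    Finset.card_pos.1 (by rw [hcard e he]; omega)
  have slot : ∀ a ∈ H, ∀ b ∈ H, Odd (a ∩ b).card ∧ 1 ≤ (a ∩ b).card ∧ (a ∩ b).card ≤ m := by
    intro a ha b hb
    by_cases hab : a = b
    · subst hab
      rw [Finset.inter_self, hcard a ha]
      exact ⟨hm, hm1, le_refl m⟩
    · obtain ⟨o1, o2, o3⟩ := hspec a ha b hb hab
      exact ⟨o1, o2, o3.trans (by omega)⟩
  refine ⟨?_, ?_, ?_, ?_, ?_⟩
  · -- uniformity
    intro e he
    obtain ⟨t, ht, ε, hε, rfl⟩ := mem_next.1 he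
    rw [card_bigEdge (pt_inj t ht)]
    have : ∀ k, (ε k).card = m := fun k => hcard _ (hε k)
    simp [this]
  · -- intersecting
    intro e he f hf
    obtain ⟨t, ht, ε, hε, rfl⟩ := mem_next.1 he
    obtain ⟨t', ht', ε', hε', rfl⟩ := mem_next.1 hf
    obtain ⟨k, k', hkk'⟩ := lines7_meet t ht t' ht'
    obtain ⟨v, hv⟩ := hint _ (hε k) _ (hε' k')
    obtain ⟨hv1, hv2⟩ := Finset.mem_inter.1 hv
    exact ⟨(v, pt t k), Finset.mem_inter.2
      ⟨mem_bigEdge.2 ⟨k, rfl, hv1⟩, mem_bigEdge.2 ⟨k', hkk', hv2⟩⟩⟩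
  · -- non-2-colorable
    intro c
    have hc := fun i : Fin 7 => hcol (fun v => c (v, i))
    choose E hE hmono using hc
    have hw : ∀ i : Fin 7, ∃ v, v ∈ E i := fun i => hne _ (hE i)
    choose w hw using hw
    obtain ⟨t, ht, hline⟩ := fano_chrom (fun i => c (w i, i))
    refine ⟨bigEdge t (fun k => E (pt t k)),
      mem_next.2 ⟨t, ht, _, fun k => hE _, rfl⟩, ?_⟩
    rintro ⟨u, i⟩ hu ⟨v, i'⟩ hv
    obtain ⟨k, rfl, hu⟩ := mem_bigEdge.1 hu
    obtain ⟨k', rfl, hv⟩ := mem_bigEdge.1 hv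
    calc c (u, pt t k) = c (w (pt t k), pt t k) := hmono _ _ hu _ (hw _)
      _ = c (w (pt t k'), pt t k') := hline k k'
      _ = c (v, pt t k') := (hmono _ _ hv _ (hw _)).symm
  · -- count
    rw [card_next hne, hnum, ← pow_mul]
    obtain ⟨r, rfl⟩ := hm
    have e1 : (2 * r + 1 - 1) / 2 = r := by omega
    have e2 : (3 * (2 * r + 1) - 1) / 2 = 3 * r + 1 := by omega
    rw [e1, e2, pow_succ]
    ring
  · -- spectrum
    intro e he f hf hef
    obtain ⟨t, ht, ε, hε, rfl⟩ := mem_next.1 he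
    obtain ⟨t', ht', ε', hε', rfl⟩ := mem_next.1 hf
    by_cases htt : t = t'
    · subst htt
      have hcardsum : (bigEdge t ε ∩ bigEdge t ε').card = ∑ k, (ε k ∩ ε' k).card := by
        rw [inter_bigEdge_same (pt_inj t ht), card_bigEdge (pt_inj t ht)]
      have hslots := fun k => slot _ (hε k) _ (hε' k)
      have hdiff : ∃ k, ε k ≠ ε' k := by
        by_contra hall
        push_neg at hall
        exact hef (by rw [funext hall])
      obtain ⟨k1, hk1⟩ := hdiff
      have hk1le : (ε k1 ∩ ε' k1).card ≤ m - 2 :=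
        (hspec _ (hε k1) _ (hε' k1) hk1).2.2
      rw [hcardsum, Fin.sum_univ_three]
      obtain ⟨o0, l0, u0⟩ := hslots 0
      obtain ⟨o1, l1, u1⟩ := hslots 1
      obtain ⟨o2, l2, u2⟩ := hslots 2
      rw [Nat.odd_iff] at o0 o1 o2
      refine ⟨by rw [Nat.odd_iff]; omega, by omega, ?_⟩
      fin_cases k1
      · have hk' : #(ε 0 ∩ ε' 0) ≤ m - 2 := hk1le
        omega
      · have hk' : #(ε 1 ∩ ε' 1) ≤ m - 2 := hk1le
        omega
      · have hk' : #(ε 2 ∩ ε' 2) ≤ m - 2 := hk1le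
        omega
    · obtain ⟨k0, k0', hk0⟩ := lines7_meet t ht t' ht'
      have hcardeq : (bigEdge t ε ∩ bigEdge t' ε').card = (ε k0 ∩ ε' k0').card := by
        rw [inter_bigEdge_ne ht ht' htt hk0]
        exact Finset.card_image_of_injective _ (fun a b hab => by simpa using congrArg Prod.fst hab)
      obtain ⟨o1, o2, o3⟩ := slot _ (hε k0) _ (hε' k0')
      rw [hcardeq]
      exact ⟨o1, o2, by omega⟩

lemma main : ∀ j : ℕ, ∃ (V : Type) (_ : Fintype V) (d : DecidableEq V)
    (H : Finset (Finset V)), @Good (3 ^ j) V d H := by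
  intro j
  induction j with
  | zero =>
    refine ⟨Fin 1, inferInstance, inferInstance, {{0}}, ?_, ?_, ?_, ?_, ?_⟩
    · intro e he; simp at he; subst he; rfl
    · intro e he f hf
      simp only [Finset.mem_singleton] at he hf
      subst he; subst hf
      exact ⟨0, by simp⟩
    · intro c
      refine ⟨{0}, by simp, fun u hu v hv => ?_⟩
      simp only [Finset.mem_singleton] at hu hv
      rw [hu, hv]
    · rfl
    · intro e he f hf hef
      simp only [Finset.mem_singleton] at he hf
      subst he; subst hf
      exact absurd rfl hef
  | succ j ih =>
    obtain ⟨V, fV, dV, H, hH⟩ := ih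
    letI := fV; letI := dV
    refine ⟨V × Fin 7, inferInstance, inferInstance, next H, ?_⟩
    have h3 : Odd ((3 : ℕ) ^ j) := Odd.pow (Nat.odd_iff.2 rfl)
    have h1 : 1 ≤ (3 : ℕ) ^ j := Nat.one_le_pow j 3 (by norm_num)
    have heq : (3 : ℕ) ^ (j + 1) = 3 * 3 ^ j := by ring
    rw [heq]
    exact step h3 h1 hH

end S19

open Finset

/-- Iterated Fano plane construction: for every `n` that is a power of 3 there is an
`n`-uniform, intersecting, non-2-colorable hypergraph with `7^{(n−1)/2}` edges whose
intersection spectrum consists only of odd numbers between `1` and `n − 2`. -/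
theorem stmt_19 (n : ℕ) (hpow : ∃ j : ℕ, n = 3 ^ j) :
    ∃ (N : ℕ) (H : Finset (Finset (Fin N))),
      (∀ e ∈ H, e.card = n) ∧
      (∀ e ∈ H, ∀ f ∈ H, (e ∩ f).Nonempty) ∧
      (¬ ∃ c : Fin N → Bool, ∀ e ∈ H, ∃ u ∈ e, ∃ v ∈ e, c u ≠ c v) ∧
      H.card = 7 ^ ((n - 1) / 2) ∧
      (∀ i ∈ H.offDiag.image fun p => (p.1 ∩ p.2).card,
        Odd i ∧ 1 ≤ i ∧ i ≤ n - 2) := by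
  obtain ⟨j, rfl⟩ := hpow
  obtain ⟨V, fV, dV, H, hH⟩ := S19.main j
  letI := fV; letI := dV
  obtain ⟨hcard, hint, hcol, hnum, hspec⟩ := hH
  set σ : V ≃ Fin (Fintype.card V) := Fintype.equivFin V with hσdef
  refine ⟨Fintype.card V, H.image (fun e => e.image σ), ?_, ?_, ?_, ?_, ?_⟩
  · intro e' he'
    obtain ⟨e, he, rfl⟩ := Finset.mem_image.1 he'
    rw [Finset.card_image_of_injective _ σ.injective]
    exact hcard e he
  · intro e' he' f' hf'
    obtain ⟨e, he, rfl⟩ := Finset.mem_image.1 he'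
    obtain ⟨f, hf, rfl⟩ := Finset.mem_image.1 hf'
    rw [← Finset.image_inter _ _ σ.injective]
    exact (hint e he f hf).image _
  · rintro ⟨c, hc⟩
    obtain ⟨e, he, hmono⟩ := hcol (fun v => c (σ v))
    obtain ⟨u', hu', v', hv', hneq⟩ := hc (e.image σ) (Finset.mem_image_of_mem _ he)
    obtain ⟨u, hu, rfl⟩ := Finset.mem_image.1 hu'
    obtain ⟨v, hv, rfl⟩ := Finset.mem_image.1 hv'
    exact hneq (hmono u hu v hv)
  · rw [Finset.card_image_of_injective _ (Finset.image_injective σ.injective)]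
    exact hnum
  · intro i hi
    simp only [Finset.mem_image, Finset.mem_offDiag] at hi
    obtain ⟨⟨a, b⟩, ⟨ha, hb, hab⟩, rfl⟩ := hi
    obtain ⟨e, he, rfl⟩ := ha
    obtain ⟨f, hf, rfl⟩ := hb
    have hef : e ≠ f := fun h => hab (by rw [h])
    simp only [← Finset.image_inter _ _ σ.injective,
      Finset.card_image_of_injective _ σ.injective]
    exact hspec e he f hf hef
end
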